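/- arXiv:2212.09842 — 3 statements merged into one kernel-verified Lean document; each statement's English description precedes it below -/
import Mathlib

section
/- Define φ : [0,1] → [0,1] as follows: φ(0) = 0; for each n ≥ 1, divide I_n = [2^{−n}, 2^{−n+1}] into 2n+1 subintervals I_n^1, …, I_n^{2n+1} of equal length (ordered left to right), and let φ restricted to I_n^k be the increasing affine bijection of I_n^k onto I_n when k is odd and the decreasing affine bijection of I_n^k onto I_n when k is even. Then the topological entropy of φ is infinite, while both the lower and upper metric mean dimension of ([0,1], |·|, φ) equal 0. -/
open Filter Set Topology

noncomputable section

/-- `sep(n,φ,ε)`: the maximal cardinality of an `(n,φ,ε)`-separated set with respect to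
the metric `d`, where a set `A` is `(n,φ,ε)`-separated if for all distinct `x, y ∈ A`
one has `max_{0 ≤ i < n} d(φ^i x, φ^i y) > ε`. -/
def sepNum {X : Type*} (d : X → X → ℝ) (φ : X → X) (n : ℕ) (ε : ℝ) : ℕ :=
  sSup {m : ℕ | ∃ A : Finset X,
    (∀ x ∈ A, ∀ y ∈ A, x ≠ y → ∃ i < n, ε < d (φ^[i] x) (φ^[i] y)) ∧ A.card = m}

/-- `sep(φ,ε) = limsup_{n→∞} (1/n) log sep(n,φ,ε)`. -/
def sepExp {X : Type*} (d : X → X → ℝ) (φ : X → X) (ε : ℝ) : ℝ :=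
  Filter.limsup (fun n : ℕ => Real.log (sepNum d φ n ε) / n) Filter.atTop

/-- The lower metric mean dimension: `liminf_{ε→0⁺} sep(φ,ε)/|log ε|`. -/
def mdimLower {X : Type*} (d : X → X → ℝ) (φ : X → X) : ℝ :=
  Filter.liminf (fun ε : ℝ => sepExp d φ ε / |Real.log ε|) (nhdsWithin 0 (Set.Ioi 0))

/-- The upper metric mean dimension: `limsup_{ε→0⁺} sep(φ,ε)/|log ε|`. -/
def mdimUpper {X : Type*} (d : X → X → ℝ) (φ : X → X) : ℝ :=
  Filter.limsup (fun ε : ℝ => sepExp d φ ε / |Real.log ε|) (nhdsWithin 0 (Set.Ioi 0))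

/-- The metric `d(x,y) = |x - y|` on `[0,1]`. -/
def dI : unitInterval → unitInterval → ℝ := fun x y => |(x : ℝ) - (y : ℝ)|

/-- The left endpoint of the `k`-th (0-indexed) of the `2n+1` equal subintervals of
`I_n = [2^{-n}, 2^{-n+1}]`. -/
def hazardEndpoint (n k : ℕ) : ℝ :=
  (2 : ℝ) ^ (-(n : ℤ)) + (k : ℝ) * ((2 : ℝ) ^ (-(n : ℤ)) / (2 * (n : ℝ) + 1))

/-- `φ` is the Hazard map: `φ(0) = 0`, and on the `k`-th (0-indexed) of the `2n+1` equal
subintervals of `I_n = [2^{-n}, 2^{-n+1}]` it is the increasing (for `k` even, i.e. odd in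
1-indexed counting) resp. decreasing (for `k` odd) affine bijection onto `I_n`. -/
def IsHazardMap (φ : unitInterval → unitInterval) : Prop :=
  (∀ x : unitInterval, (x : ℝ) = 0 → (φ x : ℝ) = 0) ∧
  ∀ n : ℕ, 1 ≤ n → ∀ k : ℕ, k < 2 * n + 1 → ∀ x : unitInterval,
    (x : ℝ) ∈ Set.Icc (hazardEndpoint n k) (hazardEndpoint n (k + 1)) →
    (φ x : ℝ) =
      if k % 2 = 0 then
        (2 * (n : ℝ) + 1) * ((x : ℝ) - hazardEndpoint n k) + (2 : ℝ) ^ (-(n : ℤ))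
      else
        (2 : ℝ) ^ (-(n : ℤ) + 1) - (2 * (n : ℝ) + 1) * ((x : ℝ) - hazardEndpoint n k)

namespace HazardAux


def bpow (m : ℕ) : ℝ := (2 : ℝ) ^ (-(m : ℤ))
def Lm (m : ℕ) : ℝ := 2 * (m : ℝ) + 1
def dm (m : ℕ) : ℝ := bpow m / Lm m
def ep (m k : ℕ) : ℝ := bpow m + (k : ℝ) * dm m

lemma ep_eq_hazard (m k : ℕ) : ep m k = hazardEndpoint m k := rfl

lemma bpow_pos (m : ℕ) : 0 < bpow m := zpow_pos (by norm_num) _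

lemma bpow_eq_inv (m : ℕ) : bpow m = ((2 : ℝ) ^ m)⁻¹ := by
  rw [bpow, zpow_neg, zpow_natCast]

lemma bpow_le_one (m : ℕ) : bpow m ≤ 1 := by
  rw [bpow_eq_inv]
  rw [inv_le_one_iff₀]
  right; exact one_le_pow₀ (by norm_num)

lemma bpow_succ (m : ℕ) : bpow (m + 1) = bpow m / 2 := by
  rw [bpow, bpow]
  rw [show (-(↑(m+1) : ℤ)) = -(m : ℤ) + (-1) by push_cast; ring]
  rw [zpow_add₀ (by norm_num : (2:ℝ) ≠ 0)]
  norm_num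
  ring

lemma bpow_antitone {m m' : ℕ} (h : m ≤ m') : bpow m' ≤ bpow m := by
  rw [bpow_eq_inv, bpow_eq_inv]
  exact inv_anti₀ (by positivity) (pow_le_pow_right₀ (by norm_num) h)

lemma bpow_strict {m m' : ℕ} (h : m < m') : bpow m' < bpow m := by
  rw [bpow_eq_inv, bpow_eq_inv]
  exact inv_strictAnti₀ (by positivity) (pow_lt_pow_right₀ (by norm_num) h)

lemma Lm_pos (m : ℕ) : 0 < Lm m := by unfold Lm; positivity

lemma one_le_Lm (m : ℕ) : 1 ≤ Lm m := by
  unfold Lm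
  have : (0:ℝ) ≤ m := Nat.cast_nonneg m
  linarith

lemma dm_pos (m : ℕ) : 0 < dm m := div_pos (bpow_pos m) (Lm_pos m)

lemma Lm_mul_dm (m : ℕ) : Lm m * dm m = bpow m := by
  rw [dm, mul_div_cancel₀ _ (Lm_pos m).ne']

lemma ep_zero (m : ℕ) : ep m 0 = bpow m := by simp [ep]

lemma ep_succ (m k : ℕ) : ep m (k + 1) = ep m k + dm m := by
  simp [ep]; push_cast; ring

lemma ep_mono {m : ℕ} {k j : ℕ} (h : k ≤ j) : ep m k ≤ ep m j := by
  unfold ep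
  have : (k : ℝ) ≤ j := Nat.cast_le.2 h
  nlinarith [dm_pos m]

lemma ep_top (m : ℕ) : ep m (2 * m + 1) = 2 * bpow m := by
  unfold ep dm Lm
  have h : (2 * (m : ℝ) + 1) ≠ 0 := by positivity
  push_cast
  field_simp
  ring

lemma ep_nonneg (m k : ℕ) : 0 ≤ ep m k := by
  unfold ep
  have := bpow_pos m
  have := dm_pos m
  positivity

lemma ep_le_top {m k : ℕ} (h : k ≤ 2 * m + 1) : ep m k ≤ 2 * bpow m := by
  rw [← ep_top m]; exact ep_mono h

lemma two_bpow_le_one {m : ℕ} (h : 1 ≤ m) : 2 * bpow m ≤ 1 := by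
  have : bpow m ≤ bpow 1 := bpow_antitone h
  have h1 : bpow 1 = 1 / 2 := by norm_num [bpow]
  linarith

lemma ep_mem_unit {m k : ℕ} (hm : 1 ≤ m) (h : k ≤ 2 * m + 1) :
    ep m k ∈ Set.Icc (0 : ℝ) 1 :=
  ⟨ep_nonneg m k, (ep_le_top h).trans (two_bpow_le_one hm)⟩

/-- every point of `I_m` lies in some branch -/
lemma mem_branch {m : ℕ} {x : ℝ} (hx : x ∈ Set.Icc (bpow m) (2 * bpow m)) :
    ∃ k < 2 * m + 1, x ∈ Set.Icc (ep m k) (ep m (k + 1)) := by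
  set t : ℝ := (x - bpow m) / dm m with ht
  have hd := dm_pos m
  have ht0 : 0 ≤ t := div_nonneg (by linarith [hx.1]) hd.le
  refine ⟨min (2 * m) ⌊t⌋₊, ?_, ?_, ?_⟩
  · exact lt_of_le_of_lt (min_le_left _ _) (by omega)
  · have h1 : (↑(min (2 * m) ⌊t⌋₊) : ℝ) ≤ t := by
      calc (↑(min (2 * m) ⌊t⌋₊) : ℝ) ≤ (⌊t⌋₊ : ℝ) := Nat.cast_le.2 (min_le_right _ _)
        _ ≤ t := Nat.floor_le ht0
    have : (↑(min (2 * m) ⌊t⌋₊) : ℝ) * dm m ≤ t * dm m :=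
      mul_le_mul_of_nonneg_right h1 hd.le
    rw [ht] at this
    rw [div_mul_cancel₀ _ hd.ne'] at this
    unfold ep; linarith
  · rcases le_or_gt ⌊t⌋₊ (2 * m) with h | h
    · rw [min_eq_right h]
      have h2 : t < (⌊t⌋₊ : ℝ) + 1 := Nat.lt_floor_add_one t
      have : t * dm m < ((⌊t⌋₊ : ℝ) + 1) * dm m := by
        exact mul_lt_mul_of_pos_right h2 hd
      rw [ht, div_mul_cancel₀ _ hd.ne'] at this
      unfold ep; push_cast; linarith
    · rw [min_eq_left h.le]
      have := hx.2
      have h3 := ep_top m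
      unfold ep at h3 ⊢
      push_cast at h3 ⊢
      linarith


lemma abs_eq_of_le {a b : ℝ} (h : a ≤ b) : |a - b| = b - a := by
  rw [abs_sub_comm]; exact abs_of_nonneg (by linarith)

lemma Lm_mono {m m' : ℕ} (h : m ≤ m') : Lm m ≤ Lm m' := by
  unfold Lm; have : (m:ℝ) ≤ m' := Nat.cast_le.2 h; linarith

lemma exists_m {M : ℕ} (hM : 1 ≤ M) (x : unitInterval)
    (hx : (x : ℝ) ∈ Set.Icc (bpow M) 1) :
    ∃ m, 1 ≤ m ∧ m ≤ M ∧ (x : ℝ) ∈ Set.Icc (bpow m) (2 * bpow m) := by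
  induction M, hM using Nat.le_induction with
  | base =>
    refine ⟨1, le_refl 1, le_refl 1, hx.1, ?_⟩
    have h1 : (2:ℝ) * bpow 1 = 1 := by rw [bpow]; norm_num
    rw [h1]; exact hx.2
  | succ M hM ih =>
    rcases le_total (bpow M) ((x : ℝ)) with h | h
    · obtain ⟨m, h1, h2, h3⟩ := ih ⟨h, hx.2⟩
      exact ⟨m, h1, by omega, h3⟩
    · refine ⟨M + 1, by omega, le_refl _, hx.1, ?_⟩
      have h2 : (2:ℝ) * bpow (M+1) = bpow M := by rw [bpow_succ]; ring
      rw [h2]; exact h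

section MapStructure

variable {φ : unitInterval → unitInterval} (hmap : IsHazardMap φ)

include hmap

lemma phi_eq {m k : ℕ} (hm : 1 ≤ m) (hk : k < 2 * m + 1) (x : unitInterval)
    (hx : (x : ℝ) ∈ Set.Icc (ep m k) (ep m (k + 1))) :
    (φ x : ℝ) = if k % 2 = 0 then Lm m * ((x : ℝ) - ep m k) + bpow m
      else 2 * bpow m - Lm m * ((x : ℝ) - ep m k) := by
  have h := hmap.2 m hm k hk x (by rwa [ep_eq_hazard, ep_eq_hazard] at hx)
  rw [h]
  have h2 : (2 : ℝ) ^ (-(m : ℤ) + 1) = 2 * bpow m := by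
    rw [zpow_add₀ (by norm_num : (2:ℝ) ≠ 0)]
    rw [bpow]; ring
  by_cases hk2 : k % 2 = 0
  · simp only [if_pos hk2]; rfl
  · simp only [if_neg hk2]; rw [h2]; rfl

lemma phi_mem {m k : ℕ} (hm : 1 ≤ m) (hk : k < 2 * m + 1) (x : unitInterval)
    (hx : (x : ℝ) ∈ Set.Icc (ep m k) (ep m (k + 1))) :
    (φ x : ℝ) ∈ Set.Icc (bpow m) (2 * bpow m) := by
  rw [phi_eq hmap hm hk x hx]
  have h1 : 0 ≤ (x : ℝ) - ep m k := by linarith [hx.1]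
  have h2 : (x : ℝ) - ep m k ≤ dm m := by
    have := hx.2; rw [ep_succ] at this; linarith
  have hL := Lm_pos m
  have hld := Lm_mul_dm m
  have h3 : 0 ≤ Lm m * ((x : ℝ) - ep m k) := by positivity
  have h4 : Lm m * ((x : ℝ) - ep m k) ≤ bpow m := by
    calc Lm m * ((x : ℝ) - ep m k) ≤ Lm m * dm m :=
      mul_le_mul_of_nonneg_left h2 hL.le
    _ = bpow m := hld
  split_ifs <;> constructor <;> linarith

lemma phi_maps {m : ℕ} (hm : 1 ≤ m) (x : unitInterval)
    (hx : (x : ℝ) ∈ Set.Icc (bpow m) (2 * bpow m)) :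
    (φ x : ℝ) ∈ Set.Icc (bpow m) (2 * bpow m) := by
  obtain ⟨k, hk, hxk⟩ := mem_branch hx
  exact phi_mem hmap hm hk x hxk

lemma lip_branch {m k : ℕ} (hm : 1 ≤ m) (hk : k < 2 * m + 1) (x y : unitInterval)
    (hx : (x : ℝ) ∈ Set.Icc (ep m k) (ep m (k + 1)))
    (hy : (y : ℝ) ∈ Set.Icc (ep m k) (ep m (k + 1))) :
    |(φ x : ℝ) - (φ y : ℝ)| ≤ Lm m * |(x : ℝ) - (y : ℝ)| := by
  rw [phi_eq hmap hm hk x hx, phi_eq hmap hm hk y hy]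
  have hL := Lm_pos m
  split_ifs
  · rw [show Lm m * ((x:ℝ) - ep m k) + bpow m - (Lm m * ((y:ℝ) - ep m k) + bpow m)
        = Lm m * ((x:ℝ) - (y:ℝ)) by ring, abs_mul, abs_of_pos hL]
  · rw [show 2 * bpow m - Lm m * ((x:ℝ) - ep m k) - (2 * bpow m - Lm m * ((y:ℝ) - ep m k))
        = Lm m * ((y:ℝ) - (x:ℝ)) by ring, abs_mul, abs_of_pos hL, abs_sub_comm]

lemma phi_fixed_bpow {m : ℕ} (hm : 1 ≤ m) (x : unitInterval)
    (hx : (x : ℝ) = bpow m) : (φ x : ℝ) = bpow m := by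
  have hx' : (x : ℝ) ∈ Set.Icc (ep m 0) (ep m 1) := by
    rw [hx, ep_zero]; exact ⟨le_refl _, by rw [← ep_zero m]; exact ep_mono (by omega)⟩
  rw [phi_eq hmap hm (by omega) x hx', if_pos (by norm_num), ep_zero, hx]
  ring

lemma phi_val_mem_ep {m k : ℕ} (hm : 1 ≤ m) (hk : k ≤ 2 * m + 1) (x : unitInterval)
    (hx : (x : ℝ) = ep m k) :
    (φ x : ℝ) ∈ Set.Icc (bpow m) (2 * bpow m) := by
  rcases lt_or_eq_of_le hk with h | h
  · exact phi_mem hmap hm h x (by rw [hx]; exact ⟨le_refl _, ep_mono (Nat.le_succ k)⟩)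
  · have h2m : 2 * m < 2 * m + 1 := by omega
    refine phi_mem hmap hm h2m x ?_
    rw [hx, h]; exact ⟨ep_mono (Nat.le_succ _), le_refl _⟩

/-- asymmetric Lipschitz bound inside `I_m` -/
lemma lip_Im_le {m : ℕ} (hm : 1 ≤ m) (x y : unitInterval)
    (hx : (x : ℝ) ∈ Set.Icc (bpow m) (2 * bpow m))
    (hy : (y : ℝ) ∈ Set.Icc (bpow m) (2 * bpow m))
    (hxy : (x : ℝ) ≤ (y : ℝ)) :
    |(φ x : ℝ) - (φ y : ℝ)| ≤ Lm m * ((y : ℝ) - (x : ℝ)) := by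
  obtain ⟨k, hk, hxk⟩ := mem_branch hx
  obtain ⟨j, hj, hyj⟩ := mem_branch hy
  have hL := Lm_pos m
  rcases lt_trichotomy k j with h | h | h
  · -- k < j : chain through endpoints
    have hk1j : k + 1 ≤ j := h
    set u : unitInterval := ⟨ep m (k + 1), ep_mem_unit hm (by omega)⟩ with hu
    set v : unitInterval := ⟨ep m j, ep_mem_unit hm (by omega)⟩ with hv
    have hcu : (u : ℝ) = ep m (k + 1) := rfl
    have hcv : (v : ℝ) = ep m j := rfl
    have hxu : |(φ x : ℝ) - (φ u : ℝ)| ≤ Lm m * (ep m (k+1) - (x:ℝ)) := by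
      have h5 := lip_branch hmap hm hk x u hxk
        ⟨by rw [hcu]; exact ep_mono (Nat.le_succ k), by rw [hcu]⟩
      rwa [hcu, abs_eq_of_le hxk.2] at h5
    have hvy : |(φ v : ℝ) - (φ y : ℝ)| ≤ Lm m * ((y:ℝ) - ep m j) := by
      have h5 := lip_branch hmap hm hj v y
        ⟨by rw [hcv], by rw [hcv]; exact ep_mono (Nat.le_succ j)⟩ hyj
      rwa [hcv, abs_eq_of_le hyj.1] at h5
    have huv : |(φ u : ℝ) - (φ v : ℝ)| ≤ Lm m * (ep m j - ep m (k+1)) := by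
      rcases eq_or_lt_of_le hk1j with he | hlt
      · have huv' : u = v := by apply Subtype.ext; rw [hcu, hcv, he]
        rw [huv', sub_self, abs_zero]
        exact mul_nonneg hL.le (by linarith [ep_mono (m := m) hk1j])
      · have h1 := phi_val_mem_ep hmap hm (k := k+1) (by omega) u hcu
        have h2 := phi_val_mem_ep hmap hm (k := j) (by omega) v hcv
        have hb : |(φ u : ℝ) - (φ v : ℝ)| ≤ bpow m := by
          rw [abs_le]; constructor <;> [linarith [h1.1, h2.2]; linarith [h1.2, h2.1]]
        have hgap : dm m ≤ ep m j - ep m (k + 1) := by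
          have h6 : ep m (k + 2) ≤ ep m j := ep_mono (by omega)
          rw [ep_succ m (k+1)] at h6
          linarith
        calc |(φ u : ℝ) - (φ v : ℝ)| ≤ bpow m := hb
          _ = Lm m * dm m := (Lm_mul_dm m).symm
          _ ≤ Lm m * (ep m j - ep m (k+1)) := mul_le_mul_of_nonneg_left hgap hL.le
    have hx1 : (x : ℝ) ≤ ep m (k+1) := hxk.2
    have h2 : ep m (k+1) ≤ ep m j := ep_mono hk1j
    have h3 : ep m j ≤ (y : ℝ) := hyj.1
    calc |(φ x : ℝ) - (φ y : ℝ)|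
        ≤ |(φ x : ℝ) - (φ u : ℝ)| + |(φ u : ℝ) - (φ v : ℝ)| + |(φ v : ℝ) - (φ y : ℝ)| := by
          have t1 := abs_sub_le ((φ x : ℝ)) ((φ u : ℝ)) ((φ y : ℝ))
          have t2 := abs_sub_le ((φ u : ℝ)) ((φ v : ℝ)) ((φ y : ℝ))
          linarith
      _ ≤ Lm m * (ep m (k+1) - (x:ℝ)) + Lm m * (ep m j - ep m (k+1))
          + Lm m * ((y:ℝ) - ep m j) := by linarith
      _ = Lm m * ((y : ℝ) - (x : ℝ)) := by ring
  · -- same branch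
    subst h
    have h5 := lip_branch hmap hm hk x y hxk hyj
    rwa [abs_eq_of_le hxy] at h5
  · -- j < k forces x = y
    have hxe : ep m k ≤ (x : ℝ) := hxk.1
    have hye : (y : ℝ) ≤ ep m (j + 1) := hyj.2
    have h6 : ep m (j + 1) ≤ ep m k := ep_mono h
    have hxy2 : (x : ℝ) = (y : ℝ) := le_antisymm hxy (by linarith)
    have h7 : x = y := Subtype.ext hxy2
    rw [h7, sub_self, abs_zero, sub_self, mul_zero]

lemma lip_Im {m : ℕ} (hm : 1 ≤ m) (x y : unitInterval)
    (hx : (x : ℝ) ∈ Set.Icc (bpow m) (2 * bpow m))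
    (hy : (y : ℝ) ∈ Set.Icc (bpow m) (2 * bpow m)) :
    |(φ x : ℝ) - (φ y : ℝ)| ≤ Lm m * |(x : ℝ) - (y : ℝ)| := by
  rcases le_total ((x : ℝ)) ((y : ℝ)) with h | h
  · rw [abs_eq_of_le h]
    exact lip_Im_le hmap hm x y hx hy h
  · rw [abs_sub_comm ((x:ℝ)), abs_eq_of_le h, abs_sub_comm ((φ x : ℝ))]
    exact lip_Im_le hmap hm y x hy hx h

lemma lip_tail {M : ℕ} (hM : 1 ≤ M) (x y : unitInterval)
    (hx : (x : ℝ) ∈ Set.Icc (bpow M) 1) (hy : (y : ℝ) ∈ Set.Icc (bpow M) 1) :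
    |(φ x : ℝ) - (φ y : ℝ)| ≤ Lm M * |(x : ℝ) - (y : ℝ)| := by
  induction M, hM using Nat.le_induction generalizing x y with
  | base =>
    have h1 : (2:ℝ) * bpow 1 = 1 := by rw [bpow]; norm_num
    exact lip_Im hmap (le_refl 1) x y (by rw [h1]; exact hx) (by rw [h1]; exact hy)
  | succ M hM ih =>
    have h2 : (2:ℝ) * bpow (M+1) = bpow M := by rw [bpow_succ]; ring
    have hLm : Lm M ≤ Lm (M+1) := Lm_mono (Nat.le_succ M)
    have key : ∀ a b : unitInterval, (a : ℝ) ∈ Set.Icc (bpow (M+1)) 1 →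
        (b : ℝ) ∈ Set.Icc (bpow (M+1)) 1 → (a : ℝ) ≤ (b : ℝ) →
        |(φ a : ℝ) - (φ b : ℝ)| ≤ Lm (M+1) * ((b : ℝ) - (a : ℝ)) := by
      intro a b ha hb hab
      rcases le_total ((b : ℝ)) (bpow M) with h | h
      · have h5 := lip_Im hmap (by omega) a b
          ⟨ha.1, by rw [h2]; linarith⟩ ⟨hb.1, by rw [h2]; exact h⟩
        rwa [abs_eq_of_le hab] at h5
      · rcases le_total (bpow M) ((a : ℝ)) with h3 | h3
        · have h5 := ih a b ⟨h3, ha.2⟩ ⟨h, hb.2⟩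
          rw [abs_eq_of_le hab] at h5
          calc |(φ a : ℝ) - (φ b : ℝ)| ≤ Lm M * ((b:ℝ) - (a:ℝ)) := h5
            _ ≤ Lm (M+1) * ((b:ℝ) - (a:ℝ)) := by
                apply mul_le_mul_of_nonneg_right hLm; linarith
        · set u : unitInterval := ⟨bpow M, ⟨(bpow_pos M).le, bpow_le_one M⟩⟩ with hu
          have hcu : (u : ℝ) = bpow M := rfl
          have hau : |(φ a : ℝ) - (φ u : ℝ)| ≤ Lm (M+1) * (bpow M - (a:ℝ)) := by
            have h5 := lip_Im hmap (by omega) a u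
              ⟨ha.1, by rw [h2]; exact h3⟩ ⟨by rw [hcu, ← h2]; linarith [bpow_pos (M+1)], by rw [hcu, h2]⟩
            rwa [hcu, abs_eq_of_le h3] at h5
          have huy : |(φ u : ℝ) - (φ b : ℝ)| ≤ Lm (M+1) * ((b:ℝ) - bpow M) := by
            have h5 := ih u b ⟨le_of_eq hcu, by rw [hcu]; exact bpow_le_one M⟩ ⟨h, hb.2⟩
            rw [hcu, abs_eq_of_le h] at h5
            calc |(φ u : ℝ) - (φ b : ℝ)| ≤ Lm M * ((b:ℝ) - bpow M) := h5
              _ ≤ Lm (M+1) * ((b:ℝ) - bpow M) := by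
                  apply mul_le_mul_of_nonneg_right hLm; linarith
          calc |(φ a : ℝ) - (φ b : ℝ)|
              ≤ |(φ a : ℝ) - (φ u : ℝ)| + |(φ u : ℝ) - (φ b : ℝ)| :=
                abs_sub_le _ _ _
            _ ≤ Lm (M+1) * (bpow M - (a:ℝ)) + Lm (M+1) * ((b:ℝ) - bpow M) := by
                linarith
            _ = Lm (M+1) * ((b:ℝ) - (a:ℝ)) := by ring
    rcases le_total ((x : ℝ)) ((y : ℝ)) with h | h
    · rw [abs_eq_of_le h]
      exact key x y hx hy h
    · rw [abs_sub_comm ((x:ℝ)), abs_eq_of_le h, abs_sub_comm ((φ x : ℝ))]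
      exact key y x hy hx h

lemma iter_mem_Im {m : ℕ} (hm : 1 ≤ m) (x : unitInterval)
    (hx : (x : ℝ) ∈ Set.Icc (bpow m) (2 * bpow m)) (i : ℕ) :
    ((φ^[i] x : unitInterval) : ℝ) ∈ Set.Icc (bpow m) (2 * bpow m) := by
  induction i with
  | zero => simpa using hx
  | succ i ih =>
    rw [Function.iterate_succ_apply']
    exact phi_maps hmap hm _ ih

lemma iter_mem_tail {M : ℕ} (hM : 1 ≤ M) (x : unitInterval)
    (hx : (x : ℝ) ∈ Set.Icc (bpow M) 1) (i : ℕ) :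
    ((φ^[i] x : unitInterval) : ℝ) ∈ Set.Icc (bpow M) 1 := by
  obtain ⟨m, h1, h2, h3⟩ := exists_m hM x hx
  have h4 := iter_mem_Im hmap h1 x h3 i
  exact ⟨le_trans (bpow_antitone h2) h4.1,
    le_trans h4.2 (two_bpow_le_one h1)⟩

lemma iter_lip {M : ℕ} (hM : 1 ≤ M) (x y : unitInterval)
    (hx : (x : ℝ) ∈ Set.Icc (bpow M) 1) (hy : (y : ℝ) ∈ Set.Icc (bpow M) 1) (i : ℕ) :
    |((φ^[i] x : unitInterval) : ℝ) - ((φ^[i] y : unitInterval) : ℝ)|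
      ≤ (Lm M) ^ i * |(x : ℝ) - (y : ℝ)| := by
  induction i with
  | zero => simp
  | succ i ih =>
    rw [Function.iterate_succ_apply', Function.iterate_succ_apply']
    calc |((φ (φ^[i] x)) : ℝ) - ((φ (φ^[i] y)) : ℝ)|
        ≤ Lm M * |((φ^[i] x : unitInterval) : ℝ) - ((φ^[i] y : unitInterval) : ℝ)| :=
          lip_tail hmap hM _ _ (iter_mem_tail hmap hM x hx i) (iter_mem_tail hmap hM y hy i)
      _ ≤ Lm M * ((Lm M) ^ i * |(x : ℝ) - (y : ℝ)|) :=
          mul_le_mul_of_nonneg_left ih (Lm_pos M).le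
      _ = (Lm M) ^ (i+1) * |(x : ℝ) - (y : ℝ)| := by ring

lemma small_inv {M : ℕ} (hM : 1 ≤ M) (x : unitInterval)
    (hx : (x : ℝ) ∈ Set.Icc (0:ℝ) (bpow M)) :
    (φ x : ℝ) ∈ Set.Icc (0:ℝ) (bpow M) := by
  rcases eq_or_lt_of_le hx.1 with h0 | h0
  · rw [hmap.1 x h0.symm]
    exact ⟨le_refl _, (bpow_pos M).le⟩
  · obtain ⟨n, hn⟩ := exists_pow_lt_of_lt_one h0 (by norm_num : (1:ℝ)/2 < 1)
    have hbn : bpow n ≤ (x : ℝ) := by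
      rw [bpow_eq_inv]
      calc ((2:ℝ)^n)⁻¹ = ((1:ℝ)/2)^n := by rw [one_div, inv_pow]
        _ ≤ (x : ℝ) := hn.le
    set M' := max n (M + 1) with hM'
    have hbM' : bpow M' ≤ (x : ℝ) := le_trans (bpow_antitone (le_max_left _ _)) hbn
    obtain ⟨m, h1, h2, h3⟩ := exists_m (M := M') (by omega) x ⟨hbM', x.2.2⟩
    have hMm : M ≤ m := by
      by_contra hc
      push_neg at hc
      have := bpow_strict hc
      linarith [h3.1, hx.2]
    rcases eq_or_lt_of_le hMm with he | hlt
    · have hxe : (x : ℝ) = bpow m := le_antisymm (he ▸ hx.2) h3.1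
      rw [phi_fixed_bpow hmap h1 x hxe, ← he]
      exact ⟨(bpow_pos M).le, le_refl _⟩
    · have hφ := phi_maps hmap h1 x h3
      refine ⟨le_trans (bpow_pos m).le hφ.1, ?_⟩
      calc (φ x : ℝ) ≤ 2 * bpow m := hφ.2
        _ ≤ 2 * bpow (M+1) := by linarith [bpow_antitone (show M+1 ≤ m by omega)]
        _ = bpow M := by rw [bpow_succ]; ring

lemma iter_small {M : ℕ} (hM : 1 ≤ M) (x : unitInterval)
    (hx : (x : ℝ) ∈ Set.Icc (0:ℝ) (bpow M)) (i : ℕ) :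
    ((φ^[i] x : unitInterval) : ℝ) ∈ Set.Icc (0:ℝ) (bpow M) := by
  induction i with
  | zero => simpa using hx
  | succ i ih =>
    rw [Function.iterate_succ_apply']
    exact small_inv hmap hM _ ih

end MapStructure


section Counting

/-- geometric scale adapted to `ε` -/
def Mfun (ε : ℝ) : ℕ := max 1 (Nat.clog 2 ⌈1/ε⌉₊)

lemma one_le_Mfun (ε : ℝ) : 1 ≤ Mfun ε := le_max_left _ _

lemma bpow_Mfun_le {ε : ℝ} (hε : 0 < ε) : bpow (Mfun ε) ≤ ε := by
  have h1 : ((⌈1/ε⌉₊ : ℕ) : ℝ) ≤ (2:ℝ) ^ (Nat.clog 2 ⌈1/ε⌉₊) := by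
    exact_mod_cast Nat.le_pow_clog (by norm_num) _
  have h2 : 1/ε ≤ (⌈1/ε⌉₊ : ℝ) := Nat.le_ceil _
  have h3 : (2:ℝ) ^ (Nat.clog 2 ⌈1/ε⌉₊) ≤ (2:ℝ) ^ (Mfun ε) :=
    pow_le_pow_right₀ (by norm_num) (le_max_right _ _)
  have h4 : 1/ε ≤ (2:ℝ) ^ (Mfun ε) := by linarith
  rw [bpow_eq_inv]
  rw [inv_le_comm₀ (by positivity) hε]
  rwa [inv_eq_one_div]

lemma card_le_of_separated (A : Finset unitInterval) {r : ℝ} (hr : 0 < r)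
    (hsep : ∀ x ∈ A, ∀ y ∈ A, x ≠ y → r < |(x:ℝ) - (y:ℝ)|) :
    (A.card : ℝ) ≤ 1 / r + 1 := by
  classical
  have key : A.card ≤ ⌊1/r⌋₊ + 1 := by
    have hc := Finset.card_le_card_of_injOn (fun x : unitInterval => ⌊(x:ℝ)/r⌋₊)
      (s := A) (t := Finset.range (⌊1/r⌋₊ + 1)) ?_ ?_
    · simpa using hc
    · intro x _
      rw [Finset.mem_coe, Finset.mem_range, Nat.lt_succ_iff]
      exact Nat.floor_le_floor (by gcongr; exact x.2.2)
    · intro x hx y hy hf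
      by_contra hne
      have h := hsep x hx y hy hne
      have hx0 : 0 ≤ (x:ℝ)/r := div_nonneg x.2.1 hr.le
      have hy0 : 0 ≤ (y:ℝ)/r := div_nonneg y.2.1 hr.le
      have h1 : (x:ℝ)/r < ⌊(x:ℝ)/r⌋₊ + 1 := Nat.lt_floor_add_one _
      have h2 : (⌊(x:ℝ)/r⌋₊ : ℝ) ≤ (x:ℝ)/r := Nat.floor_le hx0
      have h3 : (y:ℝ)/r < ⌊(y:ℝ)/r⌋₊ + 1 := Nat.lt_floor_add_one _
      have h4 : (⌊(y:ℝ)/r⌋₊ : ℝ) ≤ (y:ℝ)/r := Nat.floor_le hy0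
      have hfe : (⌊(x:ℝ)/r⌋₊ : ℝ) = (⌊(y:ℝ)/r⌋₊ : ℝ) := by
        exact_mod_cast congrArg Nat.cast hf
      have h5 : |(x:ℝ)/r - (y:ℝ)/r| < 1 := by
        rw [abs_lt]; constructor <;> linarith
      have h6 : |(x:ℝ) - (y:ℝ)| < r := by
        have : (x:ℝ)/r - (y:ℝ)/r = ((x:ℝ) - (y:ℝ))/r := by ring
        rw [this, abs_div, abs_of_pos hr, div_lt_one hr] at h5
        exact h5
      linarith
  calc (A.card : ℝ) ≤ (⌊1/r⌋₊ : ℝ) + 1 := by exact_mod_cast key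
    _ ≤ 1/r + 1 := by linarith [Nat.floor_le (by positivity : (0:ℝ) ≤ 1/r)]

variable {φ : unitInterval → unitInterval} (hmap : IsHazardMap φ)

include hmap

lemma sep_card_bound {n : ℕ} (hn : 1 ≤ n) {ε : ℝ} (hε : 0 < ε)
    (A : Finset unitInterval)
    (hsep : ∀ x ∈ A, ∀ y ∈ A, x ≠ y → ∃ i < n, ε < dI (φ^[i] x) (φ^[i] y)) :
    (A.card : ℝ) ≤ (2 + 1/ε) * (Lm (Mfun ε)) ^ (n - 1) := by
  classical
  set M := Mfun ε with hM
  have hM1 : 1 ≤ M := one_le_Mfun ε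
  have hbε : bpow M ≤ ε := bpow_Mfun_le hε
  have hL1 : (1:ℝ) ≤ Lm M := one_le_Lm M
  have hLp : (1:ℝ) ≤ (Lm M) ^ (n-1) := one_le_pow₀ hL1
  set A1 := A.filter (fun x : unitInterval => (x:ℝ) ≤ bpow M) with hA1
  set A2 := A.filter (fun x : unitInterval => ¬((x:ℝ) ≤ bpow M)) with hA2
  have hcard : A1.card + A2.card = A.card := Finset.card_filter_add_card_filter_not _
  have h1 : A1.card ≤ 1 := by
    rw [Finset.card_le_one]
    intro x hx y hy
    by_contra hne
    obtain ⟨i, hi, hd⟩ := hsep x (Finset.mem_filter.1 hx).1 y (Finset.mem_filter.1 hy).1 hne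
    have hx' : (x:ℝ) ∈ Set.Icc (0:ℝ) (bpow M) := ⟨x.2.1, (Finset.mem_filter.1 hx).2⟩
    have hy' : (y:ℝ) ∈ Set.Icc (0:ℝ) (bpow M) := ⟨y.2.1, (Finset.mem_filter.1 hy).2⟩
    have hxi := iter_small hmap hM1 x hx' i
    have hyi := iter_small hmap hM1 y hy' i
    have : dI (φ^[i] x) (φ^[i] y) ≤ bpow M := by
      show |((φ^[i] x : unitInterval) : ℝ) - ((φ^[i] y : unitInterval) : ℝ)| ≤ bpow M
      rw [abs_le]; constructor <;> [linarith [hxi.1, hyi.2]; linarith [hxi.2, hyi.1]]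
    linarith
  set r := ε / (Lm M) ^ (n - 1) with hr
  have hrp : 0 < r := by positivity
  have h2 : (A2.card : ℝ) ≤ 1/r + 1 := by
    apply card_le_of_separated A2 hrp
    intro x hx y hy hne
    obtain ⟨i, hi, hd⟩ := hsep x (Finset.mem_filter.1 hx).1 y (Finset.mem_filter.1 hy).1 hne
    have hx' : (x:ℝ) ∈ Set.Icc (bpow M) 1 :=
      ⟨le_of_not_ge (Finset.mem_filter.1 hx).2, x.2.2⟩
    have hy' : (y:ℝ) ∈ Set.Icc (bpow M) 1 :=
      ⟨le_of_not_ge (Finset.mem_filter.1 hy).2, y.2.2⟩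
    have hlip := iter_lip hmap hM1 x y hx' hy' i
    have hd' : ε < |((φ^[i] x : unitInterval) : ℝ) - ((φ^[i] y : unitInterval) : ℝ)| := hd
    have hpow : (Lm M) ^ i ≤ (Lm M) ^ (n - 1) :=
      pow_le_pow_right₀ hL1 (by omega)
    have habs : (0:ℝ) ≤ |(x:ℝ) - (y:ℝ)| := abs_nonneg _
    have : ε < (Lm M) ^ (n-1) * |(x:ℝ) - (y:ℝ)| := by
      calc ε < (Lm M) ^ i * |(x:ℝ) - (y:ℝ)| := lt_of_lt_of_le hd' hlip
        _ ≤ (Lm M) ^ (n-1) * |(x:ℝ) - (y:ℝ)| := mul_le_mul_of_nonneg_right hpow habs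
    rw [hr, div_lt_iff₀ (by positivity)]
    linarith
  have h2' : (A2.card : ℝ) ≤ (1/ε) * (Lm M)^(n-1) + 1 := by
    rw [hr] at h2
    rw [one_div_div] at h2
    calc (A2.card : ℝ) ≤ (Lm M)^(n-1)/ε + 1 := h2
      _ = (1/ε) * (Lm M)^(n-1) + 1 := by ring
  have hcast : (A.card : ℝ) = (A1.card : ℝ) + (A2.card : ℝ) := by
    exact_mod_cast hcard.symm
  have h1' : (A1.card : ℝ) ≤ 1 := by exact_mod_cast h1
  have hεinv : 0 < 1/ε := by positivity
  rw [hcast]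
  nlinarith [hLp, hεinv]

lemma sepSet_zero_mem (n : ℕ) (ε : ℝ) :
    0 ∈ {m : ℕ | ∃ A : Finset unitInterval,
      (∀ x ∈ A, ∀ y ∈ A, x ≠ y → ∃ i < n, ε < dI (φ^[i] x) (φ^[i] y)) ∧ A.card = m} := by
  clear hmap
  exact ⟨∅, by simp, rfl⟩

lemma bddAbove_sepSet {n : ℕ} {ε : ℝ} (hε : 0 < ε) :
    BddAbove {m : ℕ | ∃ A : Finset unitInterval,
      (∀ x ∈ A, ∀ y ∈ A, x ≠ y → ∃ i < n, ε < dI (φ^[i] x) (φ^[i] y)) ∧ A.card = m} := by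
  rcases Nat.eq_zero_or_pos n with h0 | hn
  · refine ⟨1, ?_⟩
    rintro m ⟨A, hA, rfl⟩
    rw [Finset.card_le_one]
    intro x hx y hy
    by_contra hne
    obtain ⟨i, hi, -⟩ := hA x hx y hy hne
    omega
  · refine ⟨⌈(2 + 1/ε) * (Lm (Mfun ε)) ^ (n - 1)⌉₊, ?_⟩
    rintro m ⟨A, hA, rfl⟩
    have := sep_card_bound hmap hn hε A hA
    exact_mod_cast this.trans (Nat.le_ceil _)

lemma one_le_sepNum {n : ℕ} {ε : ℝ} (hε : 0 < ε) : 1 ≤ sepNum dI φ n ε := by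
  apply le_csSup (bddAbove_sepSet hmap hε)
  refine ⟨{⟨0, by norm_num, by norm_num⟩}, ?_, Finset.card_singleton _⟩
  intro x hx y hy hne
  exfalso
  exact hne ((Finset.mem_singleton.1 hx).trans (Finset.mem_singleton.1 hy).symm)

lemma sepNum_le_real {n : ℕ} (hn : 1 ≤ n) {ε : ℝ} (hε : 0 < ε) :
    (sepNum dI φ n ε : ℝ) ≤ (2 + 1/ε) * (Lm (Mfun ε)) ^ (n - 1) := by
  have hmem := Nat.sSup_mem ⟨0, sepSet_zero_mem hmap n ε⟩ (bddAbove_sepSet hmap hε)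
  obtain ⟨A, hA, hcard⟩ := hmem
  rw [sepNum, ← hcard]
  exact sep_card_bound hmap hn hε A hA

lemma sepNum_ge {n : ℕ} {ε : ℝ} (hε : 0 < ε) (A : Finset unitInterval)
    (hA : ∀ x ∈ A, ∀ y ∈ A, x ≠ y → ∃ i < n, ε < dI (φ^[i] x) (φ^[i] y)) :
    A.card ≤ sepNum dI φ n ε :=
  le_csSup (bddAbove_sepSet hmap hε) ⟨A, hA, rfl⟩

end Counting


section SepExpBounds

variable {φ : unitInterval → unitInterval} (hmap : IsHazardMap φ)

include hmap

lemma f_nonneg {ε : ℝ} (hε : 0 < ε) (n : ℕ) :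
    0 ≤ Real.log (sepNum dI φ n ε) / n := by
  apply div_nonneg _ (Nat.cast_nonneg n)
  apply Real.log_nonneg
  exact_mod_cast one_le_sepNum hmap hε

lemma f_le {ε : ℝ} (hε : 0 < ε) {n : ℕ} (hn : 1 ≤ n) :
    Real.log (sepNum dI φ n ε) / n
      ≤ Real.log (2 + 1/ε) / n + Real.log (Lm (Mfun ε)) := by
  have hK1 : (1:ℝ) ≤ Lm (Mfun ε) := one_le_Lm _
  have hlogK : 0 ≤ Real.log (Lm (Mfun ε)) := Real.log_nonneg hK1
  have hsn : (1:ℝ) ≤ (sepNum dI φ n ε : ℝ) := by exact_mod_cast one_le_sepNum hmap hε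
  have hb := sepNum_le_real hmap hn hε
  have hc : (0:ℝ) < 2 + 1/ε := by positivity
  have hKpos : (0:ℝ) < Lm (Mfun ε) := by linarith
  have hlog : Real.log (sepNum dI φ n ε)
      ≤ Real.log (2+1/ε) + ((n-1 : ℕ) : ℝ) * Real.log (Lm (Mfun ε)) := by
    calc Real.log (sepNum dI φ n ε)
        ≤ Real.log ((2+1/ε) * Lm (Mfun ε) ^ (n-1)) := by
          apply Real.log_le_log (by linarith) hb
      _ = Real.log (2+1/ε) + Real.log (Lm (Mfun ε) ^ (n-1)) :=
          Real.log_mul (ne_of_gt hc) (by positivity)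
      _ = Real.log (2+1/ε) + ((n-1:ℕ):ℝ) * Real.log (Lm (Mfun ε)) := by
          rw [Real.log_pow]
  have hnp : (0:ℝ) < n := by exact_mod_cast hn
  have h2 : ((n-1:ℕ):ℝ) ≤ (n:ℝ) := by exact_mod_cast Nat.sub_le n 1
  calc Real.log (sepNum dI φ n ε) / n
      ≤ (Real.log (2+1/ε) + ((n-1:ℕ):ℝ) * Real.log (Lm (Mfun ε))) / n := by gcongr
    _ = Real.log (2+1/ε)/n + (((n-1:ℕ):ℝ)/n) * Real.log (Lm (Mfun ε)) := by ring
    _ ≤ Real.log (2+1/ε)/n + 1 * Real.log (Lm (Mfun ε)) := by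
        apply add_le_add le_rfl
        apply mul_le_mul_of_nonneg_right _ hlogK
        rw [div_le_one hnp]; exact h2
    _ = Real.log (2+1/ε)/n + Real.log (Lm (Mfun ε)) := by ring

lemma isBoundedUnder_f {ε : ℝ} (hε : 0 < ε) :
    Filter.IsBoundedUnder (· ≤ ·) Filter.atTop
      (fun n : ℕ => Real.log (sepNum dI φ n ε) / n) := by
  apply Filter.isBoundedUnder_of
  refine ⟨Real.log (2 + 1/ε) + Real.log (Lm (Mfun ε)), ?_⟩
  intro n
  have hc1 : (0:ℝ) ≤ Real.log (2 + 1/ε) := Real.log_nonneg (by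
    have : 0 < 1/ε := by positivity
    linarith)
  have hc2 : (0:ℝ) ≤ Real.log (Lm (Mfun ε)) := Real.log_nonneg (one_le_Lm _)
  rcases Nat.eq_zero_or_pos n with h0 | hn
  · subst h0; simp only [Nat.cast_zero, div_zero]; linarith
  · have := f_le hmap hε hn
    have hnp : (0:ℝ) < n := by exact_mod_cast hn
    have hn1 : (1:ℝ) ≤ (n:ℝ) := by exact_mod_cast hn
    have : Real.log (2+1/ε)/n ≤ Real.log (2+1/ε) := by
      rw [div_le_iff₀ hnp]
      nlinarith [mul_nonneg hc1 (by linarith : (0:ℝ) ≤ (n:ℝ) - 1)]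
    linarith [f_le hmap hε hn]

lemma sepExp_le_logK {ε : ℝ} (hε : 0 < ε) :
    sepExp dI φ ε ≤ Real.log (Lm (Mfun ε)) := by
  have hcob : Filter.IsCoboundedUnder (· ≤ ·) Filter.atTop
      (fun n : ℕ => Real.log (sepNum dI φ n ε) / n) := by
    apply Filter.IsBoundedUnder.isCoboundedUnder_le
    apply Filter.isBoundedUnder_of
    exact ⟨0, fun n => f_nonneg hmap hε n⟩
  by_contra hcon
  push_neg at hcon
  set c := Real.log (2 + 1/ε) with hc
  have hc0 : 0 ≤ c := Real.log_nonneg (by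
    have : 0 < 1/ε := by positivity
    linarith)
  set η := (sepExp dI φ ε - Real.log (Lm (Mfun ε))) / 2 with hη
  have hηpos : 0 < η := by rw [hη]; linarith
  have hev : ∀ᶠ n in Filter.atTop,
      Real.log (sepNum dI φ n ε) / (n:ℝ) ≤ Real.log (Lm (Mfun ε)) + η := by
    filter_upwards [Filter.eventually_ge_atTop (max 1 (⌈c/η⌉₊ + 1))] with n hn
    have hn1 : 1 ≤ n := le_trans (le_max_left _ _) hn
    have hnN : (⌈c/η⌉₊ + 1 : ℕ) ≤ n := le_trans (le_max_right _ _) hn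
    have hnp : (0:ℝ) < n := by exact_mod_cast hn1
    have hcη : c/η ≤ (⌈c/η⌉₊ : ℝ) := Nat.le_ceil _
    have hnn : (⌈c/η⌉₊ : ℝ) + 1 ≤ (n:ℝ) := by exact_mod_cast hnN
    have h3 : c/n ≤ η := by
      rw [div_le_iff₀ hnp]
      have : c/η < (n:ℝ) := by linarith
      rw [div_lt_iff₀ hηpos] at this
      linarith
    have := f_le hmap hε hn1
    linarith
  have h9 : sepExp dI φ ε ≤ Real.log (Lm (Mfun ε)) + η :=
    Filter.limsup_le_of_le hcob hev
  linarith

lemma sepExp_ge {ε : ℝ} (hε : 0 < ε) {a : ℝ}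
    (h : ∀ n : ℕ, 1 ≤ n → a ≤ Real.log (sepNum dI φ n ε) / n) :
    a ≤ sepExp dI φ ε := by
  apply Filter.le_limsup_of_frequently_le _ (isBoundedUnder_f hmap hε)
  apply Filter.Eventually.frequently
  filter_upwards [Filter.eventually_ge_atTop 1] with n hn
  exact h n hn

lemma sepExp_nonneg {ε : ℝ} (hε : 0 < ε) : 0 ≤ sepExp dI φ ε :=
  sepExp_ge hmap hε (fun n _ => f_nonneg hmap hε n)

end SepExpBounds


section Construction

/-- inverse of branch `k` of the map on `I_m` -/
def ginv (m k : ℕ) (y : ℝ) : ℝ :=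
  if k % 2 = 0 then (y - bpow m) / Lm m + ep m k
  else (2 * bpow m - y) / Lm m + ep m k

/-- the point coded by the last `j` symbols of the word `a` (of length `n`) -/
def Fpt (m n : ℕ) (a : ℕ → ℕ) : ℕ → ℝ
  | 0 => ep m 1
  | j + 1 => ginv m (a (n - 1 - j)) (Fpt m n a j)

lemma ginv_mem_branch {m k : ℕ} (hk : k < 2 * m + 1) {y : ℝ}
    (hy : y ∈ Set.Icc (bpow m) (2 * bpow m)) :
    ginv m k y ∈ Set.Icc (ep m k) (ep m (k + 1)) := by
  have hL := Lm_pos m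
  have hd := dm_pos m
  have hld := Lm_mul_dm m
  have h1 : 0 ≤ y - bpow m := by linarith [hy.1]
  have h2 : y - bpow m ≤ bpow m := by linarith [hy.2]
  have h3 : 0 ≤ 2 * bpow m - y := by linarith [hy.2]
  have h4 : 2 * bpow m - y ≤ bpow m := by linarith [hy.1]
  have hsucc := ep_succ m k
  unfold ginv
  split_ifs
  · constructor
    · have : 0 ≤ (y - bpow m) / Lm m := by positivity
      linarith
    · have : (y - bpow m) / Lm m ≤ dm m := by
        rw [div_le_iff₀ hL]
        calc y - bpow m ≤ bpow m := h2
          _ = Lm m * dm m := hld.symm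
          _ = dm m * Lm m := by ring
      linarith
  · constructor
    · have : 0 ≤ (2 * bpow m - y) / Lm m := by positivity
      linarith
    · have : (2 * bpow m - y) / Lm m ≤ dm m := by
        rw [div_le_iff₀ hL]
        calc 2 * bpow m - y ≤ bpow m := h4
          _ = Lm m * dm m := hld.symm
          _ = dm m * Lm m := by ring
      linarith

lemma ginv_mem_shrunk {m k : ℕ} (hm : 1 ≤ m) (hk1 : 1 ≤ k) (hk2 : k ≤ 2 * m - 1) {y : ℝ}
    (hy : y ∈ Set.Icc (ep m 1) (ep m (2 * m))) :
    ginv m k y ∈ Set.Icc (ep m k + dm m / Lm m) (ep m (k + 1) - dm m / Lm m) := by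
  have hL := Lm_pos m
  have hd := dm_pos m
  have hld := Lm_mul_dm m
  have hep1 : ep m 1 = bpow m + dm m := by rw [← ep_zero m, ← ep_succ]
  have hep2m : ep m (2 * m) = bpow m + (2 * (m:ℝ)) * dm m := by
    unfold ep; push_cast; ring
  have h2b : 2 * bpow m = bpow m + (2 * (m:ℝ) + 1) * dm m := by
    have : Lm m * dm m = bpow m := hld
    unfold Lm at this
    linarith
  have hy1 : bpow m + dm m ≤ y := by rw [← hep1]; exact hy.1
  have hy2 : y ≤ bpow m + (2 * (m:ℝ)) * dm m := by rw [← hep2m]; exact hy.2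
  have hsucc := ep_succ m k
  have hLdm : Lm m * dm m = bpow m := hld
  have hLm : Lm m = 2 * (m:ℝ) + 1 := rfl
  unfold ginv
  split_ifs
  · constructor
    · have : dm m / Lm m ≤ (y - bpow m) / Lm m := by gcongr; linarith
      linarith
    · have : (y - bpow m) / Lm m ≤ (2 * (m:ℝ)) * dm m / Lm m := by gcongr; linarith
      have h7 : (2 * (m:ℝ)) * dm m / Lm m = dm m - dm m / Lm m := by
        rw [eq_sub_iff_add_eq, ← add_div, div_eq_iff hL.ne']
        rw [hLm]; ring
      linarith
  · constructor
    · have : dm m / Lm m ≤ (2 * bpow m - y) / Lm m := by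
        gcongr
        linarith
      linarith
    · have : (2 * bpow m - y) / Lm m ≤ (2 * (m:ℝ)) * dm m / Lm m := by
        gcongr
        linarith
      have h7 : (2 * (m:ℝ)) * dm m / Lm m = dm m - dm m / Lm m := by
        rw [eq_sub_iff_add_eq, ← add_div, div_eq_iff hL.ne']
        rw [hLm]; ring
      linarith

lemma shrunk_subset_mid {m k : ℕ} (hm : 1 ≤ m) (hk1 : 1 ≤ k) (hk2 : k ≤ 2 * m - 1) :
    Set.Icc (ep m k + dm m / Lm m) (ep m (k + 1) - dm m / Lm m)
      ⊆ Set.Icc (ep m 1) (ep m (2 * m)) := by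
  have hdL : 0 < dm m / Lm m := div_pos (dm_pos m) (Lm_pos m)
  intro z hz
  constructor
  · have := ep_mono (m := m) hk1
    linarith [hz.1]
  · have : ep m (k + 1) ≤ ep m (2 * m) := ep_mono (by omega)
    linarith [hz.2]

lemma mid_subset_Im {m : ℕ} (hm : 1 ≤ m) :
    Set.Icc (ep m 1) (ep m (2 * m)) ⊆ Set.Icc (bpow m) (2 * bpow m) := by
  intro z hz
  constructor
  · rw [← ep_zero m]
    exact le_trans (ep_mono (by omega)) hz.1
  · rw [← ep_top m]
    exact le_trans hz.2 (ep_mono (by omega))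

lemma Fpt_mem_mid {m n : ℕ} (hm : 1 ≤ m) {a : ℕ → ℕ}
    (ha : ∀ i, 1 ≤ a i ∧ a i ≤ 2 * m - 1) (j : ℕ) :
    Fpt m n a j ∈ Set.Icc (ep m 1) (ep m (2 * m)) := by
  induction j with
  | zero =>
    constructor
    · exact le_refl _
    · exact ep_mono (by omega)
  | succ j ih =>
    show ginv m (a (n - 1 - j)) (Fpt m n a j) ∈ _
    exact shrunk_subset_mid hm (ha _).1 (ha _).2
      (ginv_mem_shrunk hm (ha _).1 (ha _).2 ih)

lemma Fpt_succ_mem_shrunk {m n : ℕ} (hm : 1 ≤ m) {a : ℕ → ℕ}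
    (ha : ∀ i, 1 ≤ a i ∧ a i ≤ 2 * m - 1) (j : ℕ) :
    Fpt m n a (j + 1) ∈ Set.Icc (ep m (a (n - 1 - j)) + dm m / Lm m)
      (ep m (a (n - 1 - j) + 1) - dm m / Lm m) := by
  show ginv m (a (n - 1 - j)) (Fpt m n a j) ∈ _
  exact ginv_mem_shrunk hm (ha _).1 (ha _).2 (Fpt_mem_mid hm ha j)

lemma Fpt_mem_unit {m n : ℕ} (hm : 1 ≤ m) {a : ℕ → ℕ}
    (ha : ∀ i, 1 ≤ a i ∧ a i ≤ 2 * m - 1) (j : ℕ) :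
    Fpt m n a j ∈ Set.Icc (0:ℝ) 1 := by
  have h := mid_subset_Im hm (Fpt_mem_mid (n := n) hm ha j)
  exact ⟨le_trans (bpow_pos m).le h.1, le_trans h.2 (two_bpow_le_one hm)⟩

def aw (n s : ℕ) (w : Fin n → Fin s) (i : ℕ) : ℕ :=
  if h : i < n then (w ⟨i, h⟩ : ℕ) + 1 else 1

lemma aw_bounds {m n : ℕ} (hm : 1 ≤ m) (w : Fin n → Fin (2 * m - 1)) (i : ℕ) :
    1 ≤ aw n (2 * m - 1) w i ∧ aw n (2 * m - 1) w i ≤ 2 * m - 1 := by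
  unfold aw
  split_ifs with h
  · have := (w ⟨i, h⟩).2
    omega
  · omega

lemma aw_ne {n s : ℕ} {w w' : Fin n → Fin s} (i : Fin n) (hi : w i ≠ w' i) :
    aw n s w (i : ℕ) ≠ aw n s w' (i : ℕ) := by
  unfold aw
  rw [dif_pos i.2, dif_pos i.2]
  intro h
  apply hi
  have h2 : (w ⟨(i : ℕ), i.2⟩ : ℕ) = (w' ⟨(i : ℕ), i.2⟩ : ℕ) := by omega
  exact Fin.ext h2

/-- points in distinct shrunk branches are far apart -/
lemma shrunk_sep {m k k' : ℕ} (hne : k ≠ k') {p q : ℝ}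
    (hp : p ∈ Set.Icc (ep m k + dm m / Lm m) (ep m (k + 1) - dm m / Lm m))
    (hq : q ∈ Set.Icc (ep m k' + dm m / Lm m) (ep m (k' + 1) - dm m / Lm m)) :
    2 * (dm m / Lm m) ≤ |p - q| := by
  have hdL : 0 < dm m / Lm m := div_pos (dm_pos m) (Lm_pos m)
  rcases lt_or_gt_of_ne hne with h | h
  · have h1 : ep m (k + 1) ≤ ep m k' := ep_mono h
    have : p + 2 * (dm m / Lm m) ≤ q := by linarith [hp.2, hq.1]
    rw [abs_sub_comm, abs_of_nonneg (by linarith)]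
    linarith
  · have h1 : ep m (k' + 1) ≤ ep m k := ep_mono h
    have : q + 2 * (dm m / Lm m) ≤ p := by linarith [hq.2, hp.1]
    rw [abs_of_nonneg (by linarith)]
    linarith

variable {φ : unitInterval → unitInterval} (hmap : IsHazardMap φ)

include hmap

lemma phi_ginv {m k : ℕ} (hm : 1 ≤ m) (hk : k < 2 * m + 1) {y : ℝ}
    (hy : y ∈ Set.Icc (bpow m) (2 * bpow m)) (x : unitInterval)
    (hx : (x : ℝ) = ginv m k y) : (φ x : ℝ) = y := by
  have hmem : (x : ℝ) ∈ Set.Icc (ep m k) (ep m (k + 1)) := by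
    rw [hx]; exact ginv_mem_branch hk hy
  rw [phi_eq hmap hm hk x hmem, hx]
  have hL := (Lm_pos m).ne'
  unfold ginv
  split_ifs <;> (field_simp; try ring)

lemma iter_Fpt {m n : ℕ} (hm : 1 ≤ m) {a : ℕ → ℕ}
    (ha : ∀ i, 1 ≤ a i ∧ a i ≤ 2 * m - 1)
    (X : unitInterval) (hX : (X : ℝ) = Fpt m n a n) :
    ∀ i, i ≤ n → ((φ^[i] X : unitInterval) : ℝ) = Fpt m n a (n - i) := by
  intro i
  induction i with
  | zero => intro _; simpa using hX
  | succ i ih =>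
    intro hi1
    have hi : i < n := hi1
    have hYv := ih (by omega)
    set j := n - i - 1 with hj
    have hni : n - i = j + 1 := by omega
    have hfj : n - 1 - j = i := by omega
    rw [hni] at hYv
    have hY2 : ((φ^[i] X : unitInterval) : ℝ) = ginv m (a i) (Fpt m n a j) := by
      rw [hYv]
      show ginv m (a (n - 1 - j)) (Fpt m n a j) = _
      rw [hfj]
    rw [Function.iterate_succ_apply']
    have hk : a i < 2 * m + 1 := by have := (ha i).2; omega
    have hy : Fpt m n a j ∈ Set.Icc (bpow m) (2 * bpow m) :=
      mid_subset_Im hm (Fpt_mem_mid hm ha j)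
    rw [phi_ginv hmap hm hk hy _ hY2]
    have hnj : n - (i + 1) = j := by omega
    rw [hnj]

lemma sepNum_lower {m : ℕ} (hm : 1 ≤ m) {ε : ℝ} (hε : 0 < ε)
    (hε2 : ε < 2 * (dm m / Lm m)) (n : ℕ) :
    (2 * m - 1) ^ n ≤ sepNum dI φ n ε := by
  classical
  set s := 2 * m - 1 with hs
  let Xw : (Fin n → Fin s) → unitInterval := fun w =>
    ⟨Fpt m n (aw n s w) n, Fpt_mem_unit hm (aw_bounds hm w) n⟩
  have hXw : ∀ w, ((Xw w : unitInterval) : ℝ) = Fpt m n (aw n s w) n := fun w => rfl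
  have key : ∀ w w' : Fin n → Fin s, ∀ i : ℕ, i < n → aw n s w i ≠ aw n s w' i →
      ε < dI (φ^[i] (Xw w)) (φ^[i] (Xw w')) := by
    intro w w' i hi hne
    have h1 := iter_Fpt hmap hm (aw_bounds hm w) (Xw w) (hXw w) i (by omega)
    have h2 := iter_Fpt hmap hm (aw_bounds hm w') (Xw w') (hXw w') i (by omega)
    have hni : n - i = (n - i - 1) + 1 := by omega
    have hfj : n - 1 - (n - i - 1) = i := by omega
    have hp : Fpt m n (aw n s w) (n - i) ∈ Set.Icc (ep m (aw n s w i) + dm m / Lm m)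
        (ep m (aw n s w i + 1) - dm m / Lm m) := by
      rw [hni]
      have := Fpt_succ_mem_shrunk (n := n) hm (aw_bounds hm w) (n - i - 1)
      rwa [hfj] at this
    have hq : Fpt m n (aw n s w') (n - i) ∈ Set.Icc (ep m (aw n s w' i) + dm m / Lm m)
        (ep m (aw n s w' i + 1) - dm m / Lm m) := by
      rw [hni]
      have := Fpt_succ_mem_shrunk (n := n) hm (aw_bounds hm w') (n - i - 1)
      rwa [hfj] at this
    have hsep := shrunk_sep hne hp hq
    show ε < |((φ^[i] (Xw w) : unitInterval) : ℝ) - ((φ^[i] (Xw w') : unitInterval) : ℝ)|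
    rw [h1, h2]
    linarith
  have hinj : Function.Injective Xw := by
    intro w w' hww
    by_contra hne
    obtain ⟨i, hi⟩ := Function.ne_iff.1 hne
    have := key w w' i i.2 (aw_ne i hi)
    rw [hww] at this
    unfold dI at this
    simp at this
    linarith
  set A : Finset unitInterval := Finset.image Xw Finset.univ with hA
  have hcard : A.card = s ^ n := by
    rw [hA, Finset.card_image_of_injective _ hinj, Finset.card_univ]
    simp [Fintype.card_fun]
  have hsepA : ∀ x ∈ A, ∀ y ∈ A, x ≠ y → ∃ i < n, ε < dI (φ^[i] x) (φ^[i] y) := by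
    intro x hx y hy hxy
    obtain ⟨w, -, rfl⟩ := Finset.mem_image.1 hx
    obtain ⟨w', -, rfl⟩ := Finset.mem_image.1 hy
    have hwne : w ≠ w' := by
      intro h; exact hxy (by rw [h])
    obtain ⟨i, hi⟩ := Function.ne_iff.1 hwne
    exact ⟨i, i.2, key w w' i i.2 (aw_ne i hi)⟩
  calc s ^ n = A.card := hcard.symm
    _ ≤ sepNum dI φ n ε := sepNum_ge hmap hε A hsepA

end Construction


section Final

variable {φ : unitInterval → unitInterval} (hmap : IsHazardMap φ)

include hmap

/-- entropy part -/
lemma entropy_infinite :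
    Filter.Tendsto (fun ε : ℝ => sepExp dI φ ε) (nhdsWithin 0 (Set.Ioi 0))
      Filter.atTop := by
  rw [Filter.tendsto_atTop]
  intro C
  set m := ⌈Real.exp C⌉₊ + 1 with hm
  have hm1 : 1 ≤ m := by omega
  have hε0 : 0 < 2 * (dm m / Lm m) := by
    have := dm_pos m; have := Lm_pos m; positivity
  filter_upwards [Ioo_mem_nhdsGT hε0] with ε hε
  have hεp : 0 < ε := hε.1
  set s := 2 * m - 1 with hs
  have hmc : 0 < ⌈Real.exp C⌉₊ := Nat.ceil_pos.mpr (Real.exp_pos C)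
  have hs3 : 3 ≤ s := by rw [hs, hm]; omega
  have hsR : Real.exp C ≤ (s : ℝ) := by
    have h1 : Real.exp C ≤ (⌈Real.exp C⌉₊ : ℝ) := Nat.le_ceil _
    have h2 : (⌈Real.exp C⌉₊ : ℝ) ≤ (s : ℝ) := by
      have : ⌈Real.exp C⌉₊ ≤ s := by rw [hs, hm]; omega
      exact_mod_cast this
    linarith
  have hCs : C ≤ Real.log (s : ℝ) := by
    calc C = Real.log (Real.exp C) := (Real.log_exp C).symm
      _ ≤ Real.log (s : ℝ) := Real.log_le_log (Real.exp_pos C) hsR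
  refine le_trans hCs (sepExp_ge hmap hεp ?_)
  intro n hn
  have hnum := sepNum_lower hmap hm1 hεp hε.2 n
  have hnp : (0:ℝ) < n := by exact_mod_cast hn
  rw [le_div_iff₀ hnp]
  have hcast : ((s ^ n : ℕ) : ℝ) ≤ (sepNum dI φ n ε : ℝ) := by exact_mod_cast hnum
  have hspow : ((s ^ n : ℕ) : ℝ) = ((s:ℝ)) ^ n := by push_cast; ring
  calc Real.log (s : ℝ) * n = Real.log ((s:ℝ) ^ n) := by
        rw [Real.log_pow]; ring
    _ ≤ Real.log (sepNum dI φ n ε) := by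
        apply Real.log_le_log (by positivity)
        rw [← hspow]; exact hcast

lemma ratio_le {ε : ℝ} (hε : 0 < ε) (hε2 : ε < 1/2) :
    sepExp dI φ ε / |Real.log ε|
      ≤ Real.log (5 + (2/Real.log 2) * (-Real.log ε)) / (-Real.log ε) := by
  have hlog2 : 0 < Real.log 2 := Real.log_pos (by norm_num)
  have hlogε : Real.log ε < 0 := Real.log_neg hε (by linarith)
  set Lg := -Real.log ε with hLg
  have hLgpos : 0 < Lg := by rw [hLg]; linarith
  have habs : |Real.log ε| = Lg := by rw [abs_of_neg hlogε]
  -- bound on Mfun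
  have hce : (2:ℝ) < 1/ε := by rw [lt_div_iff₀ hε]; linarith
  have hceil : 1 < ⌈1/ε⌉₊ := by
    have : (1:ℕ) < ⌈1/ε⌉₊ := by
      rw [Nat.lt_ceil]; push_cast; linarith
    exact this
  set c := Nat.clog 2 ⌈1/ε⌉₊ with hc
  have hc1 : 1 ≤ c := by
    rw [hc]
    exact Nat.clog_pos (by norm_num) (by omega)
  have hMfun : Mfun ε = c := by
    rw [Mfun, max_eq_right hc1]
  have hpow : (2:ℕ) ^ (c - 1) < ⌈1/ε⌉₊ :=
    Nat.pow_pred_clog_lt_self (by norm_num) hceil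
  have hR1 : ((2:ℝ)) ^ (c - 1) < 1/ε + 1 := by
    have h2 : ((2 ^ (c-1) : ℕ) : ℝ) < (⌈1/ε⌉₊ : ℝ) := by exact_mod_cast hpow
    have h3 : (⌈1/ε⌉₊ : ℝ) < 1/ε + 1 := Nat.ceil_lt_add_one (by positivity)
    push_cast at h2
    linarith
  have hR2 : ((2:ℝ)) ^ (c - 1) < 2 * (1/ε) := by
    have : (1:ℝ) ≤ 1/ε := by
      rw [le_div_iff₀ hε]; linarith
    linarith
  have hcR : ((c:ℝ) - 1) * Real.log 2 ≤ Real.log 2 + Lg := by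
    have h4 : Real.log ((2:ℝ) ^ (c-1)) ≤ Real.log (2 * (1/ε)) :=
      Real.log_le_log (by positivity) hR2.le
    rw [Real.log_pow, Real.log_mul (by norm_num) (by positivity),
      Real.log_div (by norm_num) (ne_of_gt hε), Real.log_one] at h4
    have h5 : ((c - 1 : ℕ) : ℝ) = (c:ℝ) - 1 := by
      have : 1 ≤ c := hc1
      push_cast [this]
      ring
    rw [h5] at h4
    rw [hLg]
    linarith
  have hcbound : (c : ℝ) ≤ 2 + Lg / Real.log 2 := by
    have := hcR
    rw [sub_mul, one_mul] at this
    have h6 : (c:ℝ) * Real.log 2 ≤ 2 * Real.log 2 + Lg := by linarith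
    calc (c:ℝ) = (c:ℝ) * Real.log 2 / Real.log 2 := by
          field_simp
      _ ≤ (2 * Real.log 2 + Lg) / Real.log 2 := by gcongr
      _ = 2 + Lg / Real.log 2 := by field_simp; try ring
  have hLmb : Lm (Mfun ε) ≤ 5 + (2/Real.log 2) * Lg := by
    have : Lm (Mfun ε) = 2 * ((Mfun ε : ℕ) : ℝ) + 1 := rfl
    rw [this, hMfun]
    have h7 : (2/Real.log 2) * Lg = 2 * (Lg / Real.log 2) := by ring
    rw [h7]
    linarith
  have hLm3 : (3:ℝ) ≤ Lm (Mfun ε) := by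
    have h8 : (1:ℕ) ≤ Mfun ε := one_le_Mfun ε
    have : Lm (Mfun ε) = 2 * ((Mfun ε : ℕ) : ℝ) + 1 := rfl
    rw [this]
    have : (1:ℝ) ≤ ((Mfun ε : ℕ) : ℝ) := by exact_mod_cast h8
    linarith
  have hnum : sepExp dI φ ε ≤ Real.log (5 + (2/Real.log 2) * Lg) := by
    calc sepExp dI φ ε ≤ Real.log (Lm (Mfun ε)) := sepExp_le_logK hmap hε
      _ ≤ Real.log (5 + (2/Real.log 2) * Lg) :=
          Real.log_le_log (by linarith) hLmb
  rw [habs]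
  gcongr

lemma ratio_tendsto_zero :
    Filter.Tendsto (fun ε : ℝ => sepExp dI φ ε / |Real.log ε|)
      (nhdsWithin 0 (Set.Ioi 0)) (nhds 0) := by
  have hlog2 : 0 < Real.log 2 := Real.log_pos (by norm_num)
  set a : ℝ := 2 / Real.log 2 with ha
  have hapos : 0 < a := by positivity
  -- the majorant tends to 0
  have hneg : Filter.Tendsto (fun ε : ℝ => -Real.log ε) (nhdsWithin 0 (Set.Ioi 0))
      Filter.atTop := by
    exact Filter.tendsto_neg_atBot_atTop.comp Real.tendsto_log_nhdsGT_zero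
  have hu : Filter.Tendsto (fun t : ℝ => 5 + a * t) Filter.atTop Filter.atTop := by
    apply Filter.tendsto_atTop_add_const_left
    exact Filter.Tendsto.const_mul_atTop hapos Filter.tendsto_id
  have hlo : (fun t : ℝ => Real.log (5 + a * t)) =o[Filter.atTop] (fun t : ℝ => t) := by
    have h1 : (fun t : ℝ => Real.log (5 + a * t))
        =o[Filter.atTop] (fun t : ℝ => 5 + a * t) := by
      have := Real.isLittleO_log_id_atTop.comp_tendsto hu
      exact this
    apply h1.trans_isBigO
    rw [Asymptotics.isBigO_iff]
    refine ⟨5 + a, ?_⟩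
    filter_upwards [Filter.eventually_ge_atTop 1] with t ht
    rw [Real.norm_eq_abs, Real.norm_eq_abs,
      abs_of_nonneg (by nlinarith), abs_of_nonneg (by linarith)]
    nlinarith
  have hmaj : Filter.Tendsto (fun t : ℝ => Real.log (5 + a * t) / t)
      Filter.atTop (nhds 0) := hlo.tendsto_div_nhds_zero
  have hcomp : Filter.Tendsto
      (fun ε : ℝ => Real.log (5 + a * (-Real.log ε)) / (-Real.log ε))
      (nhdsWithin 0 (Set.Ioi 0)) (nhds 0) := hmaj.comp hneg
  apply tendsto_of_tendsto_of_tendsto_of_le_of_le' tendsto_const_nhds hcomp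
  · filter_upwards [self_mem_nhdsWithin] with ε hε
    exact div_nonneg (sepExp_nonneg hmap hε) (abs_nonneg _)
  · filter_upwards [Ioo_mem_nhdsGT (by norm_num : (0:ℝ) < 1/2)] with ε hε
    exact ratio_le hmap hε.1 hε.2

end Final

end HazardAux
/-- The Hazard map has infinite topological entropy (i.e. `sep(φ,ε) → ∞` as `ε → 0⁺`)
but both its lower and upper metric mean dimensions are `0`. -/
theorem hazardMap_entropy_infinite_mdim_zero (φ : unitInterval → unitInterval)
    (hφ : Continuous φ) (hmap : IsHazardMap φ) :
    Filter.Tendsto (fun ε : ℝ => sepExp dI φ ε) (nhdsWithin 0 (Set.Ioi 0))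
      Filter.atTop ∧
    mdimLower dI φ = 0 ∧ mdimUpper dI φ = 0 := by
  have htend := HazardAux.ratio_tendsto_zero hmap
  exact ⟨HazardAux.entropy_infinite hmap, htend.liminf_eq, htend.limsup_eq⟩
end
end

section
/- Fix β > 1 and set C = 1/Σ_{k=1}^∞ k^{−β}, a_0 = 0 and a_n = Σ_{k=1}^n C/k^β for n ≥ 1, and I_n = [a_{n−1}, a_n]. Let g(x) = |1 − |3x − 1|| for x ∈ [0,1], and let T_n : I_n → [0,1] be the unique increasing affine bijection. Define φ_β : [0,1] → [0,1] by φ_β(x) = T_n^{−1}(g^n(T_n(x))) for x ∈ I_n, n ≥ 1. Then for every α ∈ (0,1), φ_β is not α-Hölder continuous: for every K > 0 there exist x ≠ y in [0,1] with |φ_β(x) − φ_β(y)| > K|x − y|^α. -/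
open Filter Set Topology

noncomputable section

/-- The full tent-like map `g(x) = |1 - |3x - 1||`, whose `m`-th iterate folds `[0,1]`
onto itself `3^m` times. -/
def gMap : ℝ → ℝ := fun x => abs (1 - abs (3 * x - 1))

/-- `a_n = Σ_{k=1}^n C/k^β` where `C = 1/Σ_{k=1}^∞ k^{-β}`. -/
def aSeq15 (β : ℝ) : ℕ → ℝ :=
  fun m => ∑ i ∈ Finset.range m,
    (1 / ∑' k : ℕ, 1 / ((k : ℝ) + 1) ^ β) / ((i : ℝ) + 1) ^ β


lemma gMap_zero : gMap 0 = 0 := by simp [gMap]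

lemma gMap_iterate_zero (n : ℕ) : gMap^[n] 0 = 0 := Function.iterate_fixed gMap_zero n

lemma gMap_small {x : ℝ} (h0 : 0 ≤ x) (h1 : x ≤ 1/3) : gMap x = 3 * x := by
  have h : 3 * x - 1 ≤ 0 := by linarith
  rw [gMap, abs_of_nonpos h]
  have h2 : 1 - -(3 * x - 1) = 3 * x := by ring
  rw [h2, abs_of_nonneg (by linarith)]

lemma gMap_iterate_pow : ∀ n : ℕ, gMap^[n] ((3:ℝ)⁻¹ ^ n) = 1 := by
  intro n
  induction n with
  | zero => simp [gMap]
  | succ k ih =>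
    rw [Function.iterate_succ_apply]
    have h1 : ((3:ℝ)⁻¹ ^ (k+1)) ≤ 1/3 := by
      rw [pow_succ]
      have : (3:ℝ)⁻¹ ^ k ≤ 1 := pow_le_one₀ (by norm_num) (by norm_num)
      nlinarith
    have h0 : (0:ℝ) ≤ (3:ℝ)⁻¹ ^ (k+1) := by positivity
    rw [gMap_small h0 h1]
    have h2 : 3 * (3:ℝ)⁻¹ ^ (k+1) = (3:ℝ)⁻¹ ^ k := by
      rw [pow_succ]; ring
    rw [h2, ih]

/-- For `β > 1`, the map `φ_β` equal to `T_n⁻¹ ∘ g^n ∘ T_n` on each `I_n = [a_{n-1}, a_n]`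
(with `a_n = Σ_{k=1}^n C/k^β`, `C = 1/Σ_{k≥1} k^{-β}`) is not `α`-Hölder continuous for
any `α ∈ (0,1)`. -/
theorem not_holder_path_example (β : ℝ) (hβ : 1 < β) (φ : unitInterval → unitInterval)
    (hφ : Continuous φ)
    (hhorse : ∀ n : ℕ, 1 ≤ n → ∀ x : unitInterval,
      (x : ℝ) ∈ Set.Icc (aSeq15 β (n - 1)) (aSeq15 β n) →
      (φ x : ℝ) = aSeq15 β (n - 1) + (aSeq15 β n - aSeq15 β (n - 1)) *
        gMap^[n] (((x : ℝ) - aSeq15 β (n - 1)) / (aSeq15 β n - aSeq15 β (n - 1)))) :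
    ∀ α ∈ Set.Ioo (0 : ℝ) 1, ∀ K : ℝ, 0 < K → ∃ x y : unitInterval, x ≠ y ∧
      K * |(x : ℝ) - (y : ℝ)| ^ α < |(φ x : ℝ) - (φ y : ℝ)| := by
  intro α hα K hK
  obtain ⟨hα0, hα1⟩ := hα
  set S : ℝ := ∑' k : ℕ, 1 / ((k : ℝ) + 1) ^ β with hSdef
  set C : ℝ := 1 / S with hCdef
  have hsum : Summable (fun k : ℕ => 1 / ((k : ℝ) + 1) ^ β) := by
    have h1 : Summable (fun n : ℕ => 1 / (n : ℝ) ^ β) :=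
      Real.summable_one_div_nat_rpow.mpr hβ
    have h2 := (summable_nat_add_iff (f := fun n : ℕ => 1 / (n : ℝ) ^ β) 1).mpr h1
    convert h2 using 2 with k
    · rfl
    push_cast
    ring_nf
  have hterm_pos : ∀ k : ℕ, 0 < 1 / ((k : ℝ) + 1) ^ β := by
    intro k
    have : (0:ℝ) < ((k : ℝ) + 1) ^ β := Real.rpow_pos_of_pos (by positivity) β
    positivity
  have hS_pos : 0 < S := hsum.tsum_pos (fun k => (hterm_pos k).le) 0 (hterm_pos 0)
  have hC_pos : 0 < C := by positivity
  have haS : ∀ m : ℕ, aSeq15 β m = ∑ i ∈ Finset.range m, C / ((i : ℝ) + 1) ^ β := by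
    intro m; rfl
  have ha_nonneg : ∀ m : ℕ, 0 ≤ aSeq15 β m := by
    intro m
    rw [haS]
    apply Finset.sum_nonneg
    intro i _
    have h2 : (0:ℝ) < ((i : ℝ) + 1) ^ β := Real.rpow_pos_of_pos (by positivity) β
    positivity
  have ha_le_one : ∀ m : ℕ, aSeq15 β m ≤ 1 := by
    intro m
    rw [haS]
    have heq : ∑ i ∈ Finset.range m, C / ((i : ℝ) + 1) ^ β
        = C * ∑ i ∈ Finset.range m, 1 / ((i : ℝ) + 1) ^ β := by
      rw [Finset.mul_sum]; congr 1; ext i; ring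
    rw [heq]
    have hle : ∑ i ∈ Finset.range m, 1 / ((i : ℝ) + 1) ^ β ≤ S :=
      hsum.sum_le_tsum _ (fun i _ => (hterm_pos i).le)
    have h3 : C * ∑ i ∈ Finset.range m, 1 / ((i : ℝ) + 1) ^ β ≤ C * S :=
      mul_le_mul_of_nonneg_left hle hC_pos.le
    have hCS : C * S = 1 := by
      rw [hCdef]; field_simp
    linarith
  set b : ℕ := ⌈β⌉₊ with hbdef
  set sα : ℝ := ((3:ℝ)⁻¹) ^ α with hsαdef
  have hsα0 : 0 ≤ sα := Real.rpow_nonneg (by norm_num) α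
  have hsα1 : sα < 1 := Real.rpow_lt_one (by norm_num) (by norm_num) hα0
  have htend : Tendsto (fun n : ℕ => (n : ℝ) ^ b * sα ^ n) atTop (nhds 0) :=
    tendsto_pow_const_mul_const_pow_of_lt_one b hsα0 hsα1
  have hCα_pos : 0 < C ^ (1 - α) / K := by
    have : (0:ℝ) < C ^ (1 - α) := Real.rpow_pos_of_pos hC_pos _
    positivity
  have hev : ∀ᶠ n : ℕ in atTop, (n : ℝ) ^ b * sα ^ n < C ^ (1 - α) / K :=
    htend.eventually_lt_const hCα_pos
  obtain ⟨N, hNev, hN1⟩ := (hev.and (eventually_ge_atTop 1)).exists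
  set L : ℝ := C / ((N : ℝ)) ^ β with hLdef
  have hNR1 : (1:ℝ) ≤ (N : ℝ) := by exact_mod_cast hN1
  have hNβ_pos : (0:ℝ) < ((N:ℝ)) ^ β := Real.rpow_pos_of_pos (by linarith) β
  have hL_pos : 0 < L := by positivity
  have haL : aSeq15 β N = aSeq15 β (N - 1) + L := by
    have hN : N = (N - 1) + 1 := (Nat.succ_pred_eq_of_pos hN1).symm
    rw [haS, haS]
    conv_lhs => rw [hN]
    rw [Finset.sum_range_succ]
    congr 1
    rw [hLdef]
    congr 2
    have hc : ((N - 1 : ℕ) : ℝ) = (N : ℝ) - 1 := by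
      have := Nat.cast_sub hN1 (R := ℝ)
      simpa using this
    rw [hc]; ring
  set x0 : ℝ := aSeq15 β (N - 1) with hx0def
  set y0 : ℝ := x0 + L * (3:ℝ)⁻¹ ^ N with hy0def
  have hpow_pos : (0:ℝ) < (3:ℝ)⁻¹ ^ N := by positivity
  have hpow_le1 : (3:ℝ)⁻¹ ^ N ≤ 1 := pow_le_one₀ (by norm_num) (by norm_num)
  have hx0_mem : x0 ∈ Set.Icc (0:ℝ) 1 := ⟨ha_nonneg _, ha_le_one _⟩
  have hLpow_pos : 0 < L * (3:ℝ)⁻¹ ^ N := by positivity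
  have hy0_le : y0 ≤ aSeq15 β N := by
    rw [haL, hy0def]
    have : L * (3:ℝ)⁻¹ ^ N ≤ L * 1 := mul_le_mul_of_nonneg_left hpow_le1 hL_pos.le
    linarith
  have hy0_mem : y0 ∈ Set.Icc (0:ℝ) 1 := by
    constructor
    · have := ha_nonneg (N - 1)
      rw [hy0def]
      rw [← hx0def] at this
      linarith
    · exact le_trans hy0_le (ha_le_one N)
  refine ⟨⟨x0, hx0_mem⟩, ⟨y0, hy0_mem⟩, ?_, ?_⟩
  · intro h
    have heq : x0 = y0 := congrArg Subtype.val h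
    have hlt : x0 < y0 := by rw [hy0def]; linarith
    linarith
  · have hIccx : x0 ∈ Set.Icc (aSeq15 β (N - 1)) (aSeq15 β N) := by
      constructor
      · exact le_refl _
      · rw [haL]; linarith
    have hIccy : y0 ∈ Set.Icc (aSeq15 β (N - 1)) (aSeq15 β N) := by
      constructor
      · rw [hy0def]; linarith
      · exact hy0_le
    have hφx := hhorse N hN1 ⟨x0, hx0_mem⟩ hIccx
    have hφy := hhorse N hN1 ⟨y0, hy0_mem⟩ hIccy
    have hdiff : aSeq15 β N - aSeq15 β (N - 1) = L := by rw [haL]; ring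
    rw [hdiff] at hφx hφy
    have hφx' : (φ ⟨x0, hx0_mem⟩ : ℝ) = x0 := by
      rw [hφx]
      simp [gMap_iterate_zero, hx0def]
    have hφy' : (φ ⟨y0, hy0_mem⟩ : ℝ) = x0 + L := by
      rw [hφy]
      have hsub : (y0 : ℝ) - x0 = L * (3:ℝ)⁻¹ ^ N := by rw [hy0def]; ring
      have harg : ((y0 : ℝ) - x0) / L = (3:ℝ)⁻¹ ^ N := by
        rw [hsub, mul_div_cancel_left₀ _ hL_pos.ne']
      rw [harg, gMap_iterate_pow N, mul_one]
    rw [hφx', hφy']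
    have habs1 : |x0 - y0| = L * (3:ℝ)⁻¹ ^ N := by
      rw [abs_sub_comm]
      have h : y0 - x0 = L * (3:ℝ)⁻¹ ^ N := by rw [hy0def]; ring
      rw [h, abs_of_pos hLpow_pos]
    have habs2 : |x0 - (x0 + L)| = L := by
      rw [abs_sub_comm]
      have h : x0 + L - x0 = L := by ring
      rw [h, abs_of_pos hL_pos]
    rw [habs1, habs2]
    have hLα_pos : 0 < L ^ α := Real.rpow_pos_of_pos hL_pos α
    have hmul : (L * (3:ℝ)⁻¹ ^ N) ^ α = L ^ α * ((3:ℝ)⁻¹ ^ N) ^ α :=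
      Real.mul_rpow hL_pos.le hpow_pos.le
    have hcomm : ((3:ℝ)⁻¹ ^ N) ^ α = sα ^ N := by
      rw [hsαdef, ← Real.rpow_natCast ((3:ℝ)⁻¹) N, ← Real.rpow_natCast ((3:ℝ)⁻¹ ^ α) N,
        ← Real.rpow_mul (by norm_num), ← Real.rpow_mul (by norm_num), mul_comm]
    have hNb_pos : (0:ℝ) < (N:ℝ) ^ b := by positivity
    have hkey : K * sα ^ N < L ^ (1 - α) := by
      have h1 : K * sα ^ N < C ^ (1 - α) / (N:ℝ) ^ b := by
        rw [lt_div_iff₀ hNb_pos]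
        calc K * sα ^ N * (N:ℝ) ^ b = K * ((N:ℝ) ^ b * sα ^ N) := by ring
          _ < K * (C ^ (1 - α) / K) := mul_lt_mul_of_pos_left hNev hK
          _ = C ^ (1 - α) := by field_simp
      have hbexp : β * (1 - α) ≤ (b:ℝ) := by
        have hb1 : β * (1 - α) ≤ β := by nlinarith
        have hb2 : β ≤ (b:ℝ) := Nat.le_ceil β
        linarith
      have hexp : ((N:ℝ) ^ β) ^ (1 - α) ≤ (N:ℝ) ^ b := by
        rw [← Real.rpow_natCast (N:ℝ) b, ← Real.rpow_mul (by linarith : (0:ℝ) ≤ (N:ℝ))]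
        exact Real.rpow_le_rpow_of_exponent_le hNR1 hbexp
      have hexp_pos : (0:ℝ) < ((N:ℝ) ^ β) ^ (1 - α) := Real.rpow_pos_of_pos hNβ_pos _
      have h2 : C ^ (1 - α) / (N:ℝ) ^ b ≤ L ^ (1 - α) := by
        rw [hLdef, Real.div_rpow hC_pos.le hNβ_pos.le]
        gcongr
      linarith
    calc K * (L * (3:ℝ)⁻¹ ^ N) ^ α = L ^ α * (K * sα ^ N) := by
          rw [hmul, hcomm]; ring
      _ < L ^ α * L ^ (1 - α) := mul_lt_mul_of_pos_left hkey hLα_pos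
      _ = L := by
          rw [← Real.rpow_add hL_pos]
          norm_num
end
end

section
/- Let φ : [0,1] → [0,1] be continuous and suppose there are points 0 = a_0 < a_1 < a_2 < ⋯ with sup_k a_k = 1 such that, for every k ≥ 1, the interval I_k = [a_{k−1}, a_k] has length |I_k| = 6/(π² k²) and is partitioned into s_k = k^k subintervals of equal length on each of which φ is an affine bijection onto I_k. Then the lower and upper metric mean dimension of ([0,1], |·|, φ) are both equal to 1. -/
open Filter Set Topology

noncomputable section

/-- `φ` restricted to the `i`-th (0-indexed) of `s` equal-length closed subintervals of
`[u,v]` is an affine bijection onto `[u,v]`: on that subinterval `φ` is given by an affine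
map `t ↦ c t + e` whose image of the subinterval is exactly `[u,v]`. -/
def AffineLeg (φ : unitInterval → unitInterval) (u v : ℝ) (s : ℕ) (i : ℕ) : Prop :=
  ∃ c e : ℝ,
    (∀ x : unitInterval,
      (x : ℝ) ∈ Set.Icc (u + (i : ℝ) * ((v - u) / (s : ℝ)))
        (u + ((i : ℝ) + 1) * ((v - u) / (s : ℝ))) → (φ x : ℝ) = c * (x : ℝ) + e) ∧
    (fun t : ℝ => c * t + e) '' Set.Icc (u + (i : ℝ) * ((v - u) / (s : ℝ)))
        (u + ((i : ℝ) + 1) * ((v - u) / (s : ℝ))) = Set.Icc u v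

/-- Box-counting bound: every `(n,ε)`-separated set has at most `(⌊1/ε⌋+1)^n` elements. -/
lemma sep_card_le (φ : unitInterval → unitInterval) {ε : ℝ} (hε : 0 < ε) (n : ℕ)
    (A : Finset unitInterval)
    (hA : ∀ x ∈ A, ∀ y ∈ A, x ≠ y → ∃ i < n, ε < dI (φ^[i] x) (φ^[i] y)) :
    A.card ≤ (⌊1/ε⌋₊ + 1) ^ n := by
  classical
  set M := ⌊1/ε⌋₊
  set F : unitInterval → (Fin n → ℕ) := fun x i => ⌊(φ^[(i:ℕ)] x : ℝ) / ε⌋₊ with hF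
  have hmaps : ∀ x ∈ A, F x ∈ Fintype.piFinset (fun _ : Fin n => Finset.range (M + 1)) := by
    intro x _
    rw [Fintype.mem_piFinset]
    intro i
    rw [Finset.mem_range, Nat.lt_succ_iff]
    exact Nat.floor_le_floor ((div_le_div_iff_of_pos_right hε).mpr (φ^[(i:ℕ)] x).2.2)
  have hinj : (A : Set unitInterval).InjOn F := by
    intro x hx y hy hxy
    by_contra hne
    obtain ⟨i, hi, hd⟩ := hA x hx y hy hne
    have h1 := congrFun hxy ⟨i, hi⟩
    simp only [hF] at h1
    set p := ((φ^[i] x : unitInterval) : ℝ)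
    set q := ((φ^[i] y : unitInterval) : ℝ)
    have hp0 : 0 ≤ p := (φ^[i] x).2.1
    have hq0 : 0 ≤ q := (φ^[i] y).2.1
    have hp : (⌊p/ε⌋₊ : ℝ) ≤ p / ε := Nat.floor_le (by positivity)
    have hq : (⌊q/ε⌋₊ : ℝ) ≤ q / ε := Nat.floor_le (by positivity)
    have hp' : p / ε < ⌊p/ε⌋₊ + 1 := Nat.lt_floor_add_one _
    have hq' : q / ε < ⌊q/ε⌋₊ + 1 := Nat.lt_floor_add_one _
    have hd' : dI (φ^[i] x) (φ^[i] y) = |p - q| := rfl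
    rw [hd'] at hd
    have h2 : |p / ε - q / ε| < 1 := by
      rw [abs_sub_lt_iff]
      constructor <;> [skip; skip] <;>
      · rw [h1] at *
        push_cast at *
        linarith
    have h3 : |p - q| < ε := by
      have h4 : |p/ε - q/ε| = |p - q| / ε := by
        rw [div_sub_div_same, abs_div, abs_of_pos hε]
      rw [h4, div_lt_one hε] at h2
      exact h2
    linarith
  calc A.card ≤ (Fintype.piFinset (fun _ : Fin n => Finset.range (M + 1))).card :=
        Finset.card_le_card_of_injOn F hmaps hinj
    _ = (M + 1) ^ n := by
        rw [Fintype.card_piFinset]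
        simp

lemma sepNum_bddAbove (φ : unitInterval → unitInterval) {ε : ℝ} (hε : 0 < ε) (n : ℕ) :
    BddAbove {m : ℕ | ∃ A : Finset unitInterval,
      (∀ x ∈ A, ∀ y ∈ A, x ≠ y → ∃ i < n, ε < dI (φ^[i] x) (φ^[i] y)) ∧ A.card = m} := by
  refine ⟨(⌊1/ε⌋₊ + 1) ^ n, ?_⟩
  rintro m ⟨A, hA, rfl⟩
  exact sep_card_le φ hε n A hA

lemma sepNum_le (φ : unitInterval → unitInterval) {ε : ℝ} (hε : 0 < ε) (n : ℕ) :
    sepNum dI φ n ε ≤ (⌊1/ε⌋₊ + 1) ^ n := by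
  apply csSup_le
  · exact ⟨0, ⟨∅, by simp⟩⟩
  · rintro m ⟨A, hA, rfl⟩
    exact sep_card_le φ hε n A hA

lemma le_sepNum (φ : unitInterval → unitInterval) {ε : ℝ} (hε : 0 < ε) {n m : ℕ}
    (A : Finset unitInterval)
    (hA : ∀ x ∈ A, ∀ y ∈ A, x ≠ y → ∃ i < n, ε < dI (φ^[i] x) (φ^[i] y))
    (hcard : A.card = m) : m ≤ sepNum dI φ n ε :=
  le_csSup (sepNum_bddAbove φ hε n) ⟨A, hA, hcard⟩

lemma one_le_sepNum (φ : unitInterval → unitInterval) {ε : ℝ} (hε : 0 < ε) (n : ℕ) :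
    1 ≤ sepNum dI φ n ε := by
  apply le_sepNum φ hε {⟨0, by norm_num, by norm_num⟩}
  · intro x hx y hy hxy
    simp only [Finset.mem_singleton] at hx hy
    exact absurd (hx.trans hy.symm) hxy
  · simp

lemma sepExp_nonneg (φ : unitInterval → unitInterval) {ε : ℝ} (hε : 0 < ε) :
    0 ≤ sepExp dI φ ε := by
  apply le_limsup_of_frequently_le
  · apply Eventually.frequently
    filter_upwards [eventually_ge_atTop 1] with n hn
    apply div_nonneg _ (by positivity)
    have h1 : (1:ℝ) ≤ (sepNum dI φ n ε : ℝ) := by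
      exact_mod_cast one_le_sepNum φ hε n
    exact Real.log_nonneg h1
  · apply isBoundedUnder_of_eventually_le (a := Real.log ((⌊1/ε⌋₊ + 1 : ℕ) : ℝ))
    filter_upwards [eventually_ge_atTop 1] with n hn
    have h1 : (sepNum dI φ n ε : ℝ) ≤ (((⌊1/ε⌋₊ + 1) ^ n : ℕ) : ℝ) := by
      exact_mod_cast sepNum_le φ hε n
    have h2 : Real.log (sepNum dI φ n ε) ≤ n * Real.log ((⌊1/ε⌋₊ + 1 : ℕ) : ℝ) := by
      calc Real.log (sepNum dI φ n ε) ≤ Real.log (((⌊1/ε⌋₊ + 1) ^ n : ℕ) : ℝ) := by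
            apply Real.log_le_log (by exact_mod_cast one_le_sepNum φ hε n) h1
        _ = n * Real.log ((⌊1/ε⌋₊ + 1 : ℕ) : ℝ) := by push_cast; rw [Real.log_pow]
    rw [div_le_iff₀ (by positivity : (0:ℝ) < n)]
    calc Real.log (sepNum dI φ n ε) ≤ n * Real.log ((⌊1/ε⌋₊ + 1 : ℕ) : ℝ) := h2
      _ = Real.log ((⌊1/ε⌋₊ + 1 : ℕ) : ℝ) * n := mul_comm _ _

lemma sepExp_le (φ : unitInterval → unitInterval) {ε : ℝ} (hε : 0 < ε) :
    sepExp dI φ ε ≤ Real.log ((⌊1/ε⌋₊ : ℝ) + 1) := by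
  apply limsup_le_of_le
  · apply isCoboundedUnder_le_of_eventually_le atTop (x := 0)
    filter_upwards [eventually_ge_atTop 1] with n hn
    apply div_nonneg _ (by positivity)
    exact Real.log_nonneg (by exact_mod_cast one_le_sepNum φ hε n)
  · filter_upwards [eventually_ge_atTop 1] with n hn
    rw [div_le_iff₀ (by positivity : (0:ℝ) < n)]
    have h1 : (sepNum dI φ n ε : ℝ) ≤ (((⌊1/ε⌋₊ + 1) ^ n : ℕ) : ℝ) := by
      exact_mod_cast sepNum_le φ hε n
    calc Real.log (sepNum dI φ n ε) ≤ Real.log (((⌊1/ε⌋₊ + 1) ^ n : ℕ) : ℝ) :=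
          Real.log_le_log (by exact_mod_cast one_le_sepNum φ hε n) h1
      _ = Real.log ((⌊1/ε⌋₊ : ℝ) + 1) * n := by push_cast; rw [Real.log_pow]; ring

lemma le_sepExp (φ : unitInterval → unitInterval) {ε : ℝ} (hε : 0 < ε) {m : ℕ} (hm : 1 ≤ m)
    (h : ∀ n : ℕ, m ^ n ≤ sepNum dI φ n ε) :
    Real.log m ≤ sepExp dI φ ε := by
  apply le_limsup_of_frequently_le
  · apply Eventually.frequently
    filter_upwards [eventually_ge_atTop 1] with n hn
    have h1 : ((m ^ n : ℕ) : ℝ) ≤ (sepNum dI φ n ε : ℝ) := by exact_mod_cast h n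
    have h2 : n * Real.log m ≤ Real.log (sepNum dI φ n ε) := by
      calc (n : ℝ) * Real.log m = Real.log ((m ^ n : ℕ) : ℝ) := by push_cast; rw [Real.log_pow]
        _ ≤ Real.log (sepNum dI φ n ε) := Real.log_le_log (by positivity) h1
    rw [le_div_iff₀ (by positivity : (0:ℝ) < n)]
    linarith
  · apply isBoundedUnder_of_eventually_le (a := Real.log ((⌊1/ε⌋₊ : ℝ) + 1))
    filter_upwards [eventually_ge_atTop 1] with n hn
    rw [div_le_iff₀ (by positivity : (0:ℝ) < n)]
    have h1 : (sepNum dI φ n ε : ℝ) ≤ (((⌊1/ε⌋₊ + 1) ^ n : ℕ) : ℝ) := by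
      exact_mod_cast sepNum_le φ hε n
    calc Real.log (sepNum dI φ n ε) ≤ Real.log (((⌊1/ε⌋₊ + 1) ^ n : ℕ) : ℝ) :=
          Real.log_le_log (by exact_mod_cast one_le_sepNum φ hε n) h1
      _ = Real.log ((⌊1/ε⌋₊ : ℝ) + 1) * n := by push_cast; rw [Real.log_pow]; ring

lemma preimage_leg (φ : unitInterval → unitInterval) {u v : ℝ} {s : ℕ} {j : ℕ}
    (hleg : AffineLeg φ u v s j) {p q : ℝ} (hup : u ≤ p) (hpq : p ≤ q) (hqv : q ≤ v) :
    ∃ p' q' : ℝ, u + (j:ℝ) * ((v-u)/(s:ℝ)) ≤ p' ∧ p' ≤ q' ∧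
      q' ≤ u + ((j:ℝ)+1) * ((v-u)/(s:ℝ)) ∧
      ∀ x : unitInterval, (x:ℝ) ∈ Set.Icc p' q' → (φ x : ℝ) ∈ Set.Icc p q := by
  obtain ⟨c, e, hform, himg⟩ := hleg
  set α := u + (j:ℝ) * ((v-u)/(s:ℝ)) with hα
  set β := u + ((j:ℝ)+1) * ((v-u)/(s:ℝ)) with hβ
  have hpmem : p ∈ (fun t : ℝ => c * t + e) '' Set.Icc α β := by
    rw [himg]; exact ⟨hup, hpq.trans hqv⟩
  have hqmem : q ∈ (fun t : ℝ => c * t + e) '' Set.Icc α β := by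
    rw [himg]; exact ⟨hup.trans hpq, hqv⟩
  obtain ⟨t₀, ht₀, hct₀⟩ := hpmem
  obtain ⟨t₁, ht₁, hct₁⟩ := hqmem
  simp only at hct₀ hct₁
  refine ⟨min t₀ t₁, max t₀ t₁, le_min ht₀.1 ht₁.1, min_le_max,
    max_le ht₀.2 ht₁.2, ?_⟩
  intro x hx
  have hxα : α ≤ (x:ℝ) := le_trans (le_min ht₀.1 ht₁.1) hx.1
  have hxβ : (x:ℝ) ≤ β := le_trans hx.2 (max_le ht₀.2 ht₁.2)
  rw [hform x ⟨hxα, hxβ⟩]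
  rcases le_total t₀ t₁ with hle | hle
  · rw [min_eq_left hle] at hx
    rw [max_eq_right hle] at hx
    rcases eq_or_lt_of_le hle with heq | hlt
    · have hx0 : (x:ℝ) = t₀ := le_antisymm (heq ▸ hx.2) hx.1
      rw [hx0, hct₀]
      exact ⟨le_refl _, hpq⟩
    · have hc : 0 ≤ c := by nlinarith
      constructor
      · rw [← hct₀]; exact add_le_add_left (mul_le_mul_of_nonneg_left hx.1 hc) e
      · rw [← hct₁]; exact add_le_add_left (mul_le_mul_of_nonneg_left hx.2 hc) e
  · rw [min_eq_right hle] at hx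
    rw [max_eq_left hle] at hx
    rcases eq_or_lt_of_le hle with heq | hlt
    · have hx0 : (x:ℝ) = t₁ := le_antisymm (heq ▸ hx.2) hx.1
      rw [hx0, hct₁]
      exact ⟨hpq, le_refl _⟩
    · have hc : c ≤ 0 := by nlinarith
      constructor
      · rw [← hct₀]; exact add_le_add_left (mul_le_mul_of_nonpos_left hx.2 hc) e
      · rw [← hct₁]; exact add_le_add_left (mul_le_mul_of_nonpos_left hx.1 hc) e

lemma itinerary (φ : unitInterval → unitInterval) {u v : ℝ} (huv : u < v) {s : ℕ}
    (hs : 0 < s) (haff : ∀ i < s, AffineLeg φ u v s i) :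
    ∀ (n : ℕ) (w : ℕ → ℕ), (∀ i, w i < s) →
    ∃ p q : ℝ, p ≤ q ∧ u + (w 0 : ℝ) * ((v-u)/(s:ℝ)) ≤ p ∧
      q ≤ u + ((w 0 : ℝ)+1) * ((v-u)/(s:ℝ)) ∧
      ∀ x : unitInterval, (x:ℝ) ∈ Set.Icc p q → ∀ i < n,
        (φ^[i] x : ℝ) ∈ Set.Icc (u + (w i : ℝ) * ((v-u)/(s:ℝ)))
          (u + ((w i : ℝ)+1) * ((v-u)/(s:ℝ))) := by
  have hs' : (0:ℝ) < (s:ℝ) := by exact_mod_cast hs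
  have hℓ : 0 < (v-u)/(s:ℝ) := div_pos (by linarith) hs'
  have hlegv : ∀ j : ℕ, j < s → u + ((j:ℝ)+1) * ((v-u)/(s:ℝ)) ≤ v := by
    intro j hj
    have h1 : ((j:ℝ)+1) ≤ (s:ℝ) := by exact_mod_cast Nat.succ_le_of_lt hj
    have h2 : ((j:ℝ)+1) * ((v-u)/(s:ℝ)) ≤ (s:ℝ) * ((v-u)/(s:ℝ)) :=
      mul_le_mul_of_nonneg_right h1 hℓ.le
    have h3 : (s:ℝ) * ((v-u)/(s:ℝ)) = v - u := by field_simp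
    linarith
  have hlegu : ∀ j : ℕ, u ≤ u + (j:ℝ) * ((v-u)/(s:ℝ)) := by
    intro j
    have : 0 ≤ (j:ℝ) * ((v-u)/(s:ℝ)) := mul_nonneg (Nat.cast_nonneg j) hℓ.le
    linarith
  intro n
  induction n with
  | zero =>
    intro w hw
    refine ⟨u + (w 0 : ℝ) * ((v-u)/(s:ℝ)), u + ((w 0 : ℝ)+1) * ((v-u)/(s:ℝ)),
      by nlinarith, le_refl _, le_refl _, ?_⟩
    intro x hx i hi
    exact absurd hi (Nat.not_lt_zero i)
  | succ n ih =>
    intro w hw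
    obtain ⟨p₁, q₁, hpq₁, hp₁, hq₁, hitin⟩ := ih (fun i => w (i+1)) (fun i => hw (i+1))
    have hup₁ : u ≤ p₁ := le_trans (hlegu (w 1)) hp₁
    have hq₁v : q₁ ≤ v := le_trans hq₁ (hlegv (w 1) (hw 1))
    obtain ⟨p', q', hp', hpq', hq', hmap⟩ :=
      preimage_leg φ (haff (w 0) (hw 0)) hup₁ hpq₁ hq₁v
    refine ⟨p', q', hpq', hp', hq', ?_⟩
    intro x hx i hi
    cases i with
    | zero =>
      simp only [Function.iterate_zero_apply]
      exact ⟨le_trans hp' hx.1, le_trans hx.2 hq'⟩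
    | succ i =>
      rw [Function.iterate_succ_apply]
      exact hitin (φ x) (hmap x hx) i (Nat.lt_of_succ_lt_succ hi)

lemma horseshoe_sepNum (φ : unitInterval → unitInterval) {u v : ℝ}
    (hu0 : 0 ≤ u) (hv1 : v ≤ 1) (huv : u < v) {s : ℕ} (hs : 0 < s)
    (haff : ∀ i < s, AffineLeg φ u v s i) {ε : ℝ} (hε : 0 < ε) {Q m : ℕ}
    (hmQ : m * Q ≤ s) (hQsep : ε < ((Q:ℝ) - 1) * ((v-u)/(s:ℝ))) (n : ℕ) :
    m ^ n ≤ sepNum dI φ n ε := by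
  classical
  have hs' : (0:ℝ) < (s:ℝ) := by exact_mod_cast hs
  have hℓ : 0 < (v-u)/(s:ℝ) := div_pos (by linarith) hs'
  set ℓ : ℝ := (v-u)/(s:ℝ) with hℓdef
  have hQ1' : (1:ℝ) < (Q:ℝ) := by
    by_contra h
    push_neg at h
    have : ((Q:ℝ)-1)*ℓ ≤ 0 := mul_nonpos_of_nonpos_of_nonneg (by linarith) hℓ.le
    linarith
  have hQ1 : 1 ≤ Q := by exact_mod_cast hQ1'.le
  -- itinerary function
  set W : (Fin n → Fin m) → ℕ → ℕ := fun w i => if h : i < n then ((w ⟨i, h⟩ : ℕ)) * Q else 0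
    with hW
  have hWs : ∀ w i, W w i < s := by
    intro w i
    simp only [hW]
    split
    · next h =>
      have h1 : ((w ⟨i, h⟩ : ℕ)) + 1 ≤ m := (w ⟨i, h⟩).2
      calc ((w ⟨i, h⟩ : ℕ)) * Q < ((w ⟨i, h⟩ : ℕ)) * Q + Q := by omega
        _ = (((w ⟨i, h⟩ : ℕ)) + 1) * Q := by ring
        _ ≤ m * Q := Nat.mul_le_mul_right Q h1
        _ ≤ s := hmQ
    · exact hs
  -- choose points
  have hpts : ∀ w : Fin n → Fin m, ∃ x : unitInterval, ∀ i < n,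
      (φ^[i] x : ℝ) ∈ Set.Icc (u + (W w i : ℝ) * ℓ) (u + ((W w i : ℝ)+1) * ℓ) := by
    intro w
    obtain ⟨p, q, hpq, hp, hq, hit⟩ := itinerary φ huv hs haff n (W w) (hWs w)
    have hup : u ≤ p := by
      have : 0 ≤ (W w 0 : ℝ) * ℓ := mul_nonneg (Nat.cast_nonneg _) hℓ.le
      linarith
    have hqv : q ≤ v := by
      have h1 : ((W w 0 : ℝ)+1) ≤ (s:ℝ) := by exact_mod_cast Nat.succ_le_of_lt (hWs w 0)
      have h2 : ((W w 0 : ℝ)+1) * ℓ ≤ (s:ℝ) * ℓ := mul_le_mul_of_nonneg_right h1 hℓ.le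
      have h3 : (s:ℝ) * ℓ = v - u := by rw [hℓdef]; field_simp
      linarith
    refine ⟨⟨p, le_trans hu0 hup, le_trans (hpq.trans hqv) hv1⟩, ?_⟩
    intro i hi
    exact hit _ ⟨le_refl _, hpq⟩ i hi
  choose f hf using hpts
  -- separation
  have hsep : ∀ w w' : Fin n → Fin m, w ≠ w' →
      ∃ i < n, ε < dI (φ^[i] (f w)) (φ^[i] (f w')) := by
    intro w w' hne
    obtain ⟨i, hi⟩ := Function.ne_iff.1 hne
    refine ⟨i, i.2, ?_⟩
    have h1 := hf w i i.2
    have h2 := hf w' i i.2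
    have hWw : W w i = (w i : ℕ) * Q := by simp [hW, i.2]
    have hWw' : W w' i = (w' i : ℕ) * Q := by simp [hW, i.2]
    rw [hWw] at h1; rw [hWw'] at h2
    have key : ∀ (t t' : ℕ), t < t' →
        ∀ P P' : ℝ, P ∈ Set.Icc (u + ((t*Q : ℕ) : ℝ) * ℓ) (u + (((t*Q : ℕ) : ℝ)+1) * ℓ) →
          P' ∈ Set.Icc (u + ((t'*Q : ℕ) : ℝ) * ℓ) (u + (((t'*Q : ℕ) : ℝ)+1) * ℓ) →
          ε < |P - P'| := by
      intro t t' htt P P' hP hP'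
      have hcast : ((t*Q : ℕ) : ℝ) = (t:ℝ) * Q := by push_cast; ring
      have hcast' : ((t'*Q : ℕ) : ℝ) = (t':ℝ) * Q := by push_cast; ring
      have ht1 : (t:ℝ) + 1 ≤ (t':ℝ) := by exact_mod_cast Nat.succ_le_of_lt htt
      have hdiff : P' - P ≥ ((Q:ℝ) - 1) * ℓ := by
        have h3 : P ≤ u + ((t:ℝ) * Q + 1) * ℓ := by rw [hcast] at hP; exact hP.2
        have h4 : u + (t':ℝ) * Q * ℓ ≤ P' := by rw [hcast'] at hP'; exact hP'.1
        nlinarith [hℓ.le]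
      calc ε < ((Q:ℝ) - 1) * ℓ := hQsep
        _ ≤ P' - P := hdiff
        _ ≤ |P - P'| := by rw [abs_sub_comm]; exact le_abs_self _
    rcases lt_trichotomy ((w i : ℕ)) ((w' i : ℕ)) with h | h | h
    · exact key _ _ h _ _ h1 h2
    · exact absurd (Fin.ext h) hi
    · have := key _ _ h _ _ h2 h1
      rwa [abs_sub_comm] at this
    -- dI is abs of difference
  have hinj : Function.Injective f := by
    intro w w' hfw
    by_contra hne
    obtain ⟨i, _, hd⟩ := hsep w w' hne
    rw [hfw] at hd
    simp only [dI, sub_self, abs_zero] at hd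
    linarith
  set A : Finset unitInterval := Finset.image f Finset.univ with hA
  have hcard : A.card = m ^ n := by
    rw [hA, Finset.card_image_of_injective _ hinj, Finset.card_univ, Fintype.card_fun]
    simp
  apply le_sepNum φ hε A _ hcard
  intro x hx y hy hxy
  rw [hA, Finset.mem_image] at hx hy
  obtain ⟨w, _, rfl⟩ := hx
  obtain ⟨w', _, rfl⟩ := hy
  exact hsep w w' (fun h => hxy (congrArg f h))

/-- Leg length of the `k`-th horseshoe: `|I_k| / k^k`. -/
def ellk (k : ℕ) : ℝ := 6 / (Real.pi ^ 2 * (k:ℝ) ^ 2) / ((k:ℝ) ^ k)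

lemma ellk_pos {k : ℕ} (hk : 1 ≤ k) : 0 < ellk k := by
  have hk' : (0:ℝ) < (k:ℝ) := by exact_mod_cast hk
  have := Real.pi_pos
  unfold ellk
  positivity

lemma ellk_eq (k : ℕ) : ellk k = 6 / (Real.pi ^ 2 * (k:ℝ) ^ (k + 2)) := by
  unfold ellk
  rw [div_div]
  congr 1
  rw [pow_add]
  ring

lemma ellk_antitone {i j : ℕ} (hi : 1 ≤ i) (hij : i ≤ j) : ellk j ≤ ellk i := by
  have hi' : (1:ℝ) ≤ (i:ℝ) := by exact_mod_cast hi
  have hj' : (1:ℝ) ≤ (j:ℝ) := by exact_mod_cast hi.trans hij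
  have hij' : (i:ℝ) ≤ (j:ℝ) := by exact_mod_cast hij
  rw [ellk_eq, ellk_eq]
  apply div_le_div_of_nonneg_left (by norm_num) (by positivity)
  apply mul_le_mul_of_nonneg_left _ (by positivity)
  calc (i:ℝ) ^ (i + 2) ≤ (j:ℝ) ^ (i + 2) := by
        apply pow_le_pow_left₀ (by linarith) hij'
    _ ≤ (j:ℝ) ^ (j + 2) := by
        apply pow_le_pow_right₀ hj' (by omega)

lemma ellk_le {k : ℕ} (hk : 1 ≤ k) : ellk k ≤ 6 / (k:ℝ) := by
  have hk' : (1:ℝ) ≤ (k:ℝ) := by exact_mod_cast hk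
  have hpi : (1:ℝ) ≤ Real.pi ^ 2 := by nlinarith [Real.pi_gt_three]
  rw [ellk_eq]
  apply div_le_div_of_nonneg_left (by norm_num) (by linarith)
  calc (k:ℝ) = 1 * (k:ℝ) ^ 1 := by ring
    _ ≤ Real.pi ^ 2 * (k:ℝ) ^ (k+2) := by
        apply mul_le_mul hpi (pow_le_pow_right₀ hk' (by omega)) (by positivity) (by positivity)

set_option maxHeartbeats 1000000 in
/-- If `I_k = [a_{k-1}, a_k]` has length `6/(π² k²)` and is a full affine horseshoe for `φ`
with `k^k` equal legs, for every `k ≥ 1`, then both metric mean dimensions equal `1`. -/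
theorem mdim_eq_one_of_kk_horseshoes (φ : unitInterval → unitInterval)
    (hφ : Continuous φ) (a : ℕ → ℝ) (ha0 : a 0 = 0) (hmono : StrictMono a)
    (hsup : (⨆ k, a k) = 1)
    (hlen : ∀ k : ℕ, 1 ≤ k → a k - a (k - 1) = 6 / (Real.pi ^ 2 * (k : ℝ) ^ 2))
    (haff : ∀ k : ℕ, 1 ≤ k → ∀ i < k ^ k, AffineLeg φ (a (k - 1)) (a k) (k ^ k) i) :
    mdimLower dI φ = 1 ∧ mdimUpper dI φ = 1 := by
  have hpi : (0:ℝ) < Real.pi := Real.pi_pos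
  have hpi2 : (6:ℝ) ≤ Real.pi ^ 2 := by nlinarith [Real.pi_gt_three]
  have hpi3 : Real.pi ^ 2 ≤ 10 := by nlinarith [Real.pi_lt_d2, Real.pi_pos]
  have hbdd : BddAbove (Set.range a) := by
    by_contra h
    rw [Real.iSup_of_not_bddAbove h] at hsup
    norm_num at hsup
  have ha_le : ∀ k, a k ≤ 1 := fun k => hsup ▸ le_ciSup hbdd k
  have ha_nn : ∀ k, 0 ≤ a k := fun k => ha0 ▸ hmono.monotone (Nat.zero_le k)
  have key : Filter.Tendsto (fun ε : ℝ => sepExp dI φ ε / |Real.log ε|)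
      (nhdsWithin 0 (Set.Ioi 0)) (nhds 1) := by
    rw [Metric.tendsto_nhds]
    intro δ hδ
    set δ' : ℝ := δ / 2 with hδ'def
    have hδ' : 0 < δ' := by positivity
    set K : ℕ := max 5 (⌈8/δ'⌉₊ + 1) with hKdef
    have hK5 : 5 ≤ K := le_max_left _ _
    have hK8 : 8/δ' ≤ (K:ℝ) - 1 := by
      have h1 : (⌈8/δ'⌉₊ + 1 : ℕ) ≤ K := le_max_right _ _
      have h2 : 8/δ' ≤ (⌈8/δ'⌉₊ : ℝ) := Nat.le_ceil _
      have h3 : ((⌈8/δ'⌉₊ + 1 : ℕ) : ℝ) ≤ (K:ℝ) := by exact_mod_cast h1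
      push_cast at h3
      linarith
    have hK1 : 1 ≤ K - 1 := by omega
    have hη1 : 0 < ellk (K-1) := ellk_pos hK1
    set η : ℝ := min (ellk (K-1)) (min (1/2) (Real.exp (-(Real.log 2 / δ')))) with hηdef
    have hη : 0 < η := by
      apply lt_min hη1
      exact lt_min (by norm_num) (Real.exp_pos _)
    filter_upwards [Ioo_mem_nhdsGT_of_mem (Set.left_mem_Ico.2 hη)] with ε hε
    obtain ⟨hε0, hεη⟩ := hε
    have hε12 : ε < 1/2 := lt_of_lt_of_le hεη (le_trans (min_le_right _ _) (min_le_left _ _))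
    have hεexp : ε < Real.exp (-(Real.log 2 / δ')) :=
      lt_of_lt_of_le hεη (le_trans (min_le_right _ _) (min_le_right _ _))
    have hεK : ε < ellk (K-1) := lt_of_lt_of_le hεη (min_le_left _ _)
    -- basic log facts
    have hlogε : Real.log ε < 0 := Real.log_neg hε0 (by linarith)
    have habs : |Real.log ε| = -Real.log ε := abs_of_neg hlogε
    have hlog2 : (0:ℝ) < Real.log 2 := Real.log_pos (by norm_num)
    have habs2 : Real.log 2 / δ' ≤ |Real.log ε| := by
      have h1 : Real.log ε < -(Real.log 2 / δ') := by
        calc Real.log ε < Real.log (Real.exp (-(Real.log 2 / δ'))) :=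
              Real.log_lt_log hε0 hεexp
          _ = -(Real.log 2 / δ') := Real.log_exp _
      rw [habs]; linarith
    have habspos : 0 < |Real.log ε| := by
      rw [habs]
      have : Real.log ε < Real.log (1/2) := Real.log_lt_log hε0 hε12
      rw [Real.log_div one_ne_zero two_ne_zero, Real.log_one] at this
      linarith
    -- UPPER BOUND
    have hupper : sepExp dI φ ε / |Real.log ε| ≤ 1 + δ' := by
      have h1 : sepExp dI φ ε ≤ Real.log ((⌊1/ε⌋₊ : ℝ) + 1) := sepExp_le φ hε0
      have h2 : (⌊1/ε⌋₊ : ℝ) + 1 ≤ 2/ε := by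
        have h3 : (⌊1/ε⌋₊ : ℝ) ≤ 1/ε := Nat.floor_le (by positivity)
        have h4 : (1:ℝ) ≤ 1/ε := by
          rw [le_div_iff₀ hε0]; linarith
        rw [show (2:ℝ)/ε = 1/ε + 1/ε by ring]
        linarith
      have h5 : sepExp dI φ ε ≤ Real.log 2 + |Real.log ε| := by
        calc sepExp dI φ ε ≤ Real.log ((⌊1/ε⌋₊ : ℝ) + 1) := h1
          _ ≤ Real.log (2/ε) := Real.log_le_log (by positivity) h2
          _ = Real.log 2 - Real.log ε := Real.log_div two_ne_zero (ne_of_gt hε0)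
          _ = Real.log 2 + |Real.log ε| := by rw [habs]; ring
      rw [div_le_iff₀ habspos]
      have h6 : Real.log 2 ≤ δ' * |Real.log ε| := by
        rw [div_le_iff₀ hδ'] at habs2
        calc Real.log 2 ≤ |Real.log ε| * δ' := habs2
          _ = δ' * |Real.log ε| := mul_comm _ _
      linarith
    -- LOWER BOUND
    have hlower : 1 - δ' ≤ sepExp dI φ ε / |Real.log ε| := by
      -- find k
      have hex : ∃ j : ℕ, ellk (K + j) ≤ ε := by
        refine ⟨⌈6/ε⌉₊, ?_⟩
        have hc1 : (0:ℝ) < 6/ε := by positivity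
        have hc2 : 1 ≤ ⌈6/ε⌉₊ := Nat.ceil_pos.2 hc1
        have hc3 : (6:ℝ)/ε ≤ (⌈6/ε⌉₊ : ℝ) := Nat.le_ceil _
        have hc4 : (⌈6/ε⌉₊ : ℝ) ≤ ((K + ⌈6/ε⌉₊ : ℕ) : ℝ) := by
          push_cast; linarith [Nat.cast_nonneg (α := ℝ) K]
        calc ellk (K + ⌈6/ε⌉₊) ≤ 6 / ((K + ⌈6/ε⌉₊ : ℕ) : ℝ) := ellk_le (by omega)
          _ ≤ 6 / ((⌈6/ε⌉₊ : ℕ) : ℝ) := by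
              apply div_le_div_of_nonneg_left (by norm_num) _ hc4
              exact_mod_cast hc2
          _ ≤ ε := by
              rw [div_le_iff₀ (by exact_mod_cast hc2 : (0:ℝ) < (⌈6/ε⌉₊:ℝ))]
              rw [div_le_iff₀ hε0] at hc3
              linarith
      obtain ⟨k, hkK, hεk, hεk1⟩ : ∃ k : ℕ, K ≤ k ∧ ellk k ≤ ε ∧ ε < ellk (k-1) := by
        refine ⟨K + Nat.find hex, Nat.le_add_right _ _, Nat.find_spec hex, ?_⟩
        rcases Nat.eq_zero_or_pos (Nat.find hex) with h0 | hpos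
        · have he : K + Nat.find hex - 1 = K - 1 := by omega
          rw [he]; exact hεK
        · have h1 : ¬ ellk (K + (Nat.find hex - 1)) ≤ ε := Nat.find_min hex (by omega)
          have h2 : K + (Nat.find hex - 1) = K + Nat.find hex - 1 := by omega
          rw [h2] at h1; linarith [not_le.1 h1]
      have hk5 : 5 ≤ k := le_trans hK5 hkK
      have hk1 : 1 ≤ k := by omega
      -- the k-th horseshoe
      set u : ℝ := a (k-1) with hudef
      set v : ℝ := a k with hvdef
      have huv : u < v := hmono (by omega)
      have hu0 : 0 ≤ u := ha_nn _
      have hv1 : v ≤ 1 := ha_le _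
      have hL : v - u = 6 / (Real.pi ^ 2 * (k:ℝ)^2) := hlen k hk1
      have hLpos : 0 < v - u := by linarith
      set s : ℕ := k ^ k with hsdef
      have hs : 0 < s := pow_pos (by omega) k
      have hsR : ((s:ℕ):ℝ) = (k:ℝ)^k := by rw [hsdef]; push_cast; ring
      set ℓ : ℝ := (v - u)/(s:ℝ) with hℓdef
      have hℓellk : ℓ = ellk k := by
        have he : ellk k = 6 / (Real.pi ^ 2 * (k:ℝ) ^ 2) / ((k:ℝ) ^ k) := rfl
        rw [hℓdef, hL, hsR, he]
      have hℓpos : 0 < ℓ := hℓellk ▸ ellk_pos hk1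
      have hℓε : ℓ ≤ ε := hℓellk ▸ hεk
      set Q : ℕ := ⌈ε/ℓ⌉₊ + 2 with hQdef
      set m : ℕ := s / Q with hmdef
      have hQsep : ε < ((Q:ℝ) - 1) * ℓ := by
        have h1 : ε/ℓ ≤ (⌈ε/ℓ⌉₊:ℝ) := Nat.le_ceil _
        have h2 : ((Q:ℕ):ℝ) = (⌈ε/ℓ⌉₊:ℝ) + 2 := by rw [hQdef]; push_cast; ring
        have h3 : (ε/ℓ)*ℓ = ε := div_mul_cancel₀ _ (ne_of_gt hℓpos)
        have h4 : (ε/ℓ)*ℓ ≤ (⌈ε/ℓ⌉₊:ℝ)*ℓ := mul_le_mul_of_nonneg_right h1 hℓpos.le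
        have h5 : ((Q:ℝ) - 1) * ℓ = (⌈ε/ℓ⌉₊:ℝ)*ℓ + ℓ := by rw [h2]; ring
        linarith only [h3, h4, h5, hℓpos]
      have hmQ : m * Q ≤ s := Nat.div_mul_le_self _ _
      have hsep_n : ∀ n, m ^ n ≤ sepNum dI φ n ε :=
        fun n => horseshoe_sepNum φ hu0 hv1 huv hs (haff k hk1) hε0 hmQ hQsep n
      -- m is large
      have hQpos : (0:ℝ) < (Q:ℝ) := by
        have : 0 < Q := by omega
        exact_mod_cast this
      have hQle : (Q:ℝ) ≤ ε/ℓ + 3 := by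
        have h1 : (⌈ε/ℓ⌉₊:ℝ) < ε/ℓ + 1 := Nat.ceil_lt_add_one (le_of_lt (div_pos hε0 hℓpos))
        have h2 : ((Q:ℕ):ℝ) = (⌈ε/ℓ⌉₊:ℝ) + 2 := by rw [hQdef]; push_cast; ring
        linarith
      have hmgt : (s:ℝ)/(Q:ℝ) - 1 < (m:ℝ) := by
        have h1 : Q * m + s % Q = s := Nat.div_add_mod s Q
        have h2 : s % Q < Q := Nat.mod_lt _ (by omega)
        have h3 : (s:ℝ) < (Q:ℝ)*(m:ℝ) + (Q:ℝ) := by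
          have h3n : s < Q * m + Q := by omega
          exact_mod_cast h3n
        rw [sub_lt_iff_lt_add, div_lt_iff₀ hQpos]
        calc (s:ℝ) < (Q:ℝ)*(m:ℝ) + (Q:ℝ) := h3
          _ = ((m:ℝ) + 1) * (Q:ℝ) := by ring
      -- ε is much smaller than the interval length
      have hkR : (5:ℝ) ≤ (k:ℝ) := by exact_mod_cast hk5
      set j : ℝ := (k:ℝ) - 1 with hjdef
      have hj4 : (4:ℝ) ≤ j := by rw [hjdef]; linarith
      have hjpos : (0:ℝ) < j := by linarith
      have hkm1 : ((k-1:ℕ):ℝ) = j := by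
        rw [hjdef, Nat.cast_sub hk1]; norm_num
      have hkj : (k:ℝ) = j + 1 := by rw [hjdef]; ring
      have hjpow : 8*(k:ℝ)^2 ≤ j ^ (k+1) := by
        have h1 : j^4 ≤ j^(k+1) := pow_le_pow_right₀ (by linarith only [hj4]) (by omega)
        have hj16 : 16 ≤ j*j := by nlinarith only [hj4]
        have e1 : 16*(j*j) ≤ (j*j)*(j*j) :=
          mul_le_mul_of_nonneg_right hj16 (by nlinarith only [hj4])
        have e2 : 16*j ≤ 4*(j*j) := by nlinarith only [hj4]
        have h2 : 8*(k:ℝ)^2 ≤ j^4 := by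
          rw [hkj]
          nlinarith only [e1, e2, hj16]
        linarith only [h1, h2]
      have hellkm1 : ellk (k-1) = 6 / (Real.pi^2 * j^(k+1)) := by
        rw [ellk_eq]
        have he : k - 1 + 2 = k + 1 := by omega
        rw [he, hkm1]
      have hεL : 8 * ε ≤ v - u := by
        have h3 : ellk (k-1) ≤ (v-u)/8 := by
          rw [hellkm1, hL]
          have hjp : (0:ℝ) < j^(k+1) := pow_pos hjpos _
          rw [div_div, div_le_div_iff₀ (by positivity : (0:ℝ) < Real.pi^2 * j^(k+1))
            (by positivity : (0:ℝ) < Real.pi^2 * (k:ℝ)^2 * 8)]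
          have e3 : Real.pi^2*(8*(k:ℝ)^2) ≤ Real.pi^2*(j^(k+1)) :=
            mul_le_mul_of_nonneg_left hjpow (sq_nonneg Real.pi)
          nlinarith only [e3]
        linarith
      have hsl : (s:ℝ) * ℓ = v - u := by
        rw [hℓdef]
        field_simp
      have h4 : (v-u)*(Q:ℝ) ≤ (s:ℝ)*(4*ε) := by
        have h5 : (v-u)*(Q:ℝ) ≤ (v-u)*(ε/ℓ+3) := mul_le_mul_of_nonneg_left hQle hLpos.le
        have h6 : (v-u)*(ε/ℓ+3) = (s:ℝ)*ε + 3*((s:ℝ)*ℓ) := by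
          rw [← hsl]
          field_simp
        have h7 : (s:ℝ)*ℓ ≤ (s:ℝ)*ε := mul_le_mul_of_nonneg_left hℓε (by positivity)
        linarith
      have h7 : (v-u)/(4*ε) ≤ (s:ℝ)/(Q:ℝ) := by
        rw [div_le_div_iff₀ (by positivity) hQpos]
        linarith
      have hx1 : (1:ℝ) ≤ (v-u)/(8*ε) := by
        rw [le_div_iff₀ (by positivity)]
        linarith
      have hm_lb : (v-u)/(8*ε) ≤ (m:ℝ) := by
        have h8 : (v-u)/(4*ε) = 2*((v-u)/(8*ε)) := by ring
        linarith
      have hm1 : 1 ≤ m := by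
        have : (1:ℝ) ≤ (m:ℝ) := le_trans hx1 hm_lb
        exact_mod_cast this
      have hlogm : Real.log (m:ℝ) ≤ sepExp dI φ ε := le_sepExp φ hε0 hm1 hsep_n
      have hlogm2 : Real.log ((v-u)/(8*ε)) ≤ Real.log (m:ℝ) :=
        Real.log_le_log (by positivity) hm_lb
      set C : ℝ := Real.log (8/(v-u)) with hCdef
      have hlogsplit : Real.log ((v-u)/(8*ε)) = |Real.log ε| - C := by
        rw [hCdef, habs, Real.log_div (ne_of_gt hLpos) (by positivity),
          Real.log_mul (by norm_num) (ne_of_gt hε0),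
          Real.log_div (by norm_num) (ne_of_gt hLpos)]
        ring
      -- bound C
      have hC14 : C ≤ Real.log (14*(k:ℝ)^2) := by
        rw [hCdef, hL]
        have he : (8:ℝ) / (6 / (Real.pi^2*(k:ℝ)^2)) = (4/3)*(Real.pi^2*(k:ℝ)^2) := by
          field_simp
          ring
        rw [he]
        apply Real.log_le_log (by positivity)
        have e5 : Real.pi^2*(k:ℝ)^2 ≤ 10*(k:ℝ)^2 :=
          mul_le_mul_of_nonneg_right hpi3 (sq_nonneg (k:ℝ))
        nlinarith only [e5, sq_nonneg (k:ℝ)]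
      have hC4 : C ≤ 4 * Real.log (k:ℝ) := by
        have h1 : Real.log (14*(k:ℝ)^2) = Real.log 14 + 2*Real.log (k:ℝ) := by
          rw [Real.log_mul (by norm_num) (by positivity), Real.log_pow]
          push_cast
          ring
        have h2 : Real.log 14 ≤ 2 * Real.log (k:ℝ) := by
          rw [show (2:ℝ)*Real.log (k:ℝ) = Real.log ((k:ℝ)^2) by rw [Real.log_pow]; push_cast; ring]
          apply Real.log_le_log (by norm_num)
          nlinarith only [hkR, sq_nonneg ((k:ℝ)-5)]
        linarith only [h1, h2, hC14]
      have hjlog : Real.log (k:ℝ) ≤ 2 * Real.log j := by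
        rw [show (2:ℝ)*Real.log j = Real.log (j^2) by rw [Real.log_pow]; push_cast; ring]
        apply Real.log_le_log (by linarith only [hkR])
        rw [hjdef]
        nlinarith only [hkR, sq_nonneg ((k:ℝ)-3)]
      have hlogj0 : 0 ≤ Real.log j := Real.log_nonneg (by linarith)
      have hC8 : C ≤ 8 * Real.log j := by linarith
      have hεsmall : ε < (j ^ (k+1))⁻¹ := by
        have hjp : (0:ℝ) < j^(k+1) := pow_pos hjpos _
        have h1 : ellk (k-1) ≤ (j^(k+1))⁻¹ := by
          rw [hellkm1, inv_eq_one_div, div_le_div_iff₀ (by positivity) hjp]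
          have e4 : 6*(j^(k+1)) ≤ Real.pi^2*(j^(k+1)) :=
            mul_le_mul_of_nonneg_right hpi2 hjp.le
          nlinarith only [e4]
        linarith
      have habsge : ((k:ℝ)-1) * Real.log j ≤ |Real.log ε| := by
        have h1 : Real.log ε < Real.log ((j^(k+1))⁻¹) := Real.log_lt_log hε0 hεsmall
        rw [Real.log_inv, Real.log_pow] at h1
        rw [habs]
        have h2 : ((k:ℝ)-1) * Real.log j ≤ ((k+1:ℕ):ℝ) * Real.log j := by
          apply mul_le_mul_of_nonneg_right _ hlogj0
          push_cast
          linarith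
        linarith
      have hδk : 8 ≤ δ' * ((k:ℝ)-1) := by
        have h1 : (K:ℝ) ≤ (k:ℝ) := by exact_mod_cast hkK
        have h2 : 8/δ' ≤ (k:ℝ)-1 := by linarith
        rw [div_le_iff₀ hδ'] at h2
        linarith [mul_comm δ' ((k:ℝ)-1)]
      have hCfinal : C ≤ δ' * |Real.log ε| := by
        calc C ≤ 8 * Real.log j := hC8
          _ ≤ (δ' * ((k:ℝ)-1)) * Real.log j := mul_le_mul_of_nonneg_right hδk hlogj0
          _ = δ' * (((k:ℝ)-1) * Real.log j) := by ring
          _ ≤ δ' * |Real.log ε| := mul_le_mul_of_nonneg_left habsge hδ'.le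
      have hfinal : (1-δ') * |Real.log ε| ≤ sepExp dI φ ε := by
        calc (1-δ')*|Real.log ε| = |Real.log ε| - δ'*|Real.log ε| := by ring
          _ ≤ |Real.log ε| - C := by linarith
          _ = Real.log ((v-u)/(8*ε)) := hlogsplit.symm
          _ ≤ Real.log (m:ℝ) := hlogm2
          _ ≤ sepExp dI φ ε := hlogm
      rw [le_div_iff₀ habspos]
      linarith

    have : dist (sepExp dI φ ε / |Real.log ε|) 1 ≤ δ' := by
      rw [Real.dist_eq, abs_le]
      constructor <;> linarith
    calc dist (sepExp dI φ ε / |Real.log ε|) 1 ≤ δ' := this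
      _ < δ := by rw [hδ'def]; linarith
  exact ⟨key.liminf_eq, key.limsup_eq⟩
end
end
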